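/- arXiv:0910.2533 — 6 statements merged into one kernel-verified Lean document; each statement's English description precedes it below -/
import Mathlib

section
/- For every α ∈ (0, π) there is a constant C(α), depending only on α, such that for every a ∈ ℝ and every h ∈ L²(ℝ; ℂ), ( ∫₀^∞ |(Ch)(a + s e^{iα})|² ds )^{1/2} ≤ C(α) ‖h‖_{L²(ℝ)}, where (Ch)(z) = (1/(2πi)) ∫_ℝ h(u)/(u − z) du. -/
open MeasureTheory

open Set ENNReal

private lemma key_int {r : ℝ} (hr : 0 < r) :
    ∫⁻ t in Ioi (0:ℝ),
        (ENNReal.ofReal t) ^ (-(1/2) : ℝ) * (ENNReal.ofReal (t + r))⁻¹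
      ≤ ENNReal.ofReal (4 / Real.sqrt r) := by
  have hsr : 0 < Real.sqrt r := Real.sqrt_pos.mpr hr
  have hsplit : Ioi (0:ℝ) = Ioc 0 r ∪ Ioi r := (Set.Ioc_union_Ioi_eq_Ioi hr.le).symm
  rw [hsplit, lintegral_union measurableSet_Ioi (Set.Ioc_disjoint_Ioi le_rfl)]
  have h1 : ∫⁻ t in Ioc (0:ℝ) r,
      (ENNReal.ofReal t) ^ (-(1/2) : ℝ) * (ENNReal.ofReal (t + r))⁻¹
      ≤ ENNReal.ofReal (2 / Real.sqrt r) := by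
    have hb : ∫⁻ t in Ioc (0:ℝ) r,
        (ENNReal.ofReal t) ^ (-(1/2) : ℝ) * (ENNReal.ofReal (t + r))⁻¹
        ≤ ∫⁻ t in Ioc (0:ℝ) r, ENNReal.ofReal (t ^ (-(1/2) : ℝ)) * ENNReal.ofReal r⁻¹ := by
      refine lintegral_mono_ae ?_
      filter_upwards [ae_restrict_mem measurableSet_Ioc] with t ht
      rw [ENNReal.ofReal_rpow_of_pos ht.1]
      gcongr
      rw [ENNReal.ofReal_inv_of_pos hr]
      exact ENNReal.inv_le_inv.mpr (ENNReal.ofReal_le_ofReal (by linarith [ht.1]))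
    refine hb.trans ?_
    rw [lintegral_mul_const' _ _ ENNReal.ofReal_ne_top]
    have hint : IntegrableOn (fun t : ℝ => t ^ (-(1/2) : ℝ)) (Ioc 0 r) := by
      have := intervalIntegral.intervalIntegrable_rpow' (a := 0) (b := r)
        (r := -(1/2)) (by norm_num)
      rwa [intervalIntegrable_iff_integrableOn_Ioc_of_le hr.le] at this
    have hval : ∫ t in Ioc (0:ℝ) r, t ^ (-(1/2) : ℝ) = 2 * Real.sqrt r := by
      rw [← intervalIntegral.integral_of_le hr.le,
        integral_rpow (Or.inl (by norm_num))]
      rw [Real.sqrt_eq_rpow]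
      norm_num
      ring
    have : ∫⁻ t in Ioc (0:ℝ) r, ENNReal.ofReal (t ^ (-(1/2) : ℝ))
        = ENNReal.ofReal (2 * Real.sqrt r) := by
      rw [← ofReal_integral_eq_lintegral_ofReal hint ?_, hval]
      filter_upwards [ae_restrict_mem measurableSet_Ioc] with t ht
      exact Real.rpow_nonneg ht.1.le _
    rw [this, ← ENNReal.ofReal_mul (by positivity)]
    apply ENNReal.ofReal_le_ofReal
    rw [div_eq_mul_inv]
    have : Real.sqrt r * r⁻¹ = (Real.sqrt r)⁻¹ := by
      rw [← Real.sqrt_mul_self hr.le]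
      field_simp
      exact Real.sq_sqrt (Real.sqrt_nonneg _)
    nlinarith [this, hsr]
  have h2 : ∫⁻ t in Ioi r,
      (ENNReal.ofReal t) ^ (-(1/2) : ℝ) * (ENNReal.ofReal (t + r))⁻¹
      ≤ ENNReal.ofReal (2 / Real.sqrt r) := by
    have hb : ∫⁻ t in Ioi r,
        (ENNReal.ofReal t) ^ (-(1/2) : ℝ) * (ENNReal.ofReal (t + r))⁻¹
        ≤ ∫⁻ t in Ioi r, ENNReal.ofReal (t ^ (-(3/2) : ℝ)) := by
      refine lintegral_mono_ae ?_
      filter_upwards [ae_restrict_mem measurableSet_Ioi] with t ht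
      have ht0 : 0 < t := hr.trans ht
      have : (ENNReal.ofReal (t + r))⁻¹ ≤ ENNReal.ofReal t⁻¹ := by
        rw [ENNReal.ofReal_inv_of_pos ht0]
        exact ENNReal.inv_le_inv.mpr (ENNReal.ofReal_le_ofReal (by linarith))
      calc (ENNReal.ofReal t) ^ (-(1/2) : ℝ) * (ENNReal.ofReal (t + r))⁻¹
          ≤ ENNReal.ofReal (t ^ (-(1/2) : ℝ)) * ENNReal.ofReal t⁻¹ := by
            rw [ENNReal.ofReal_rpow_of_pos ht0]; gcongr
        _ = ENNReal.ofReal (t ^ (-(3/2) : ℝ)) := by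
            rw [← ENNReal.ofReal_mul (by positivity), ← Real.rpow_neg_one t,
              ← Real.rpow_add ht0]
            norm_num
    refine hb.trans ?_
    rw [← ofReal_integral_eq_lintegral_ofReal
      (integrableOn_Ioi_rpow_of_lt (by norm_num) hr) ?_]
    · apply ENNReal.ofReal_le_ofReal
      rw [integral_Ioi_rpow_of_lt (by norm_num) hr]
      rw [show (-(3/2) : ℝ) + 1 = -(1/2) by norm_num]
      rw [Real.rpow_neg hr.le, ← Real.sqrt_eq_rpow]
      rw [div_eq_mul_inv]
      ring_nf
      norm_num
    · filter_upwards [ae_restrict_mem measurableSet_Ioi] with t ht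
      have : 0 < t := hr.trans ht
      positivity
  calc _ ≤ ENNReal.ofReal (2 / Real.sqrt r) + ENNReal.ofReal (2 / Real.sqrt r) :=
        add_le_add h1 h2
    _ = ENNReal.ofReal (4 / Real.sqrt r) := by
        rw [← ENNReal.ofReal_add (by positivity) (by positivity)]
        ring_nf

private lemma abs_int {r : ℝ} (hr : 0 < r) :
    ∫⁻ v : ℝ,
        (ENNReal.ofReal |v|) ^ (-(1/2) : ℝ) * (ENNReal.ofReal (|v| + r))⁻¹
      ≤ ENNReal.ofReal (8 / Real.sqrt r) := by
  set f : ℝ → ℝ≥0∞ := fun v =>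
    (ENNReal.ofReal |v|) ^ (-(1/2) : ℝ) * (ENNReal.ofReal (|v| + r))⁻¹ with hf
  have hfm : Measurable f := by
    apply Measurable.mul
    · exact (ENNReal.measurable_ofReal.comp (measurable_norm)).pow_const _
    · exact (ENNReal.measurable_ofReal.comp (measurable_norm.add_const r)).inv
  have hIoi : ∀ s : Set ℝ, s ⊆ Ioi 0 → (∫⁻ v in s, f v) ≤ ENNReal.ofReal (4 / Real.sqrt r) := by
    intro s hs
    refine le_trans (lintegral_mono_set hs) ?_
    refine le_trans (le_of_eq (setLIntegral_congr_fun measurableSet_Ioi ?_)) (key_int hr)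
    intro v hv
    simp only [hf, abs_of_pos (show (0:ℝ) < v from hv)]
  have hpos : (∫⁻ v in Ici (0:ℝ), f v) ≤ ENNReal.ofReal (4 / Real.sqrt r) := by
    rw [← Measure.restrict_congr_set Ioi_ae_eq_Ici]
    exact hIoi _ le_rfl
  have hneg : (∫⁻ v in Iio (0:ℝ), f v) ≤ ENNReal.ofReal (4 / Real.sqrt r) := by
    have hmap : ∫⁻ v in Iio (0:ℝ), f v
        = ∫⁻ v in Ioi (0:ℝ), f (-v) := by
      rw [← Measure.map_neg_eq_self (volume : Measure ℝ)]
      rw [setLIntegral_map measurableSet_Iio hfm measurable_neg]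
      congr 1
      ext x; simp
    rw [hmap]
    have : ∀ v : ℝ, f (-v) = f v := fun v => by simp [hf, abs_neg]
    simp_rw [this]
    exact hIoi _ le_rfl
  calc ∫⁻ v, f v = (∫⁻ v in Iio (0:ℝ), f v) + ∫⁻ v in Ici (0:ℝ), f v := by
        rw [← lintegral_add_compl f measurableSet_Iio, compl_Iio]
    _ ≤ ENNReal.ofReal (4 / Real.sqrt r) + ENNReal.ofReal (4 / Real.sqrt r) :=
        add_le_add hneg hpos
    _ = ENNReal.ofReal (8 / Real.sqrt r) := by
        rw [← ENNReal.ofReal_add (by positivity) (by positivity)]; ring_nf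

private lemma ray_lower {α : ℝ} (hα : α ∈ Set.Ioo 0 Real.pi) (a u : ℝ) {s : ℝ} (hs : 0 < s) :
    Real.sin α / 2 * (s + |u - a|)
      ≤ ‖(u : ℂ) - ((a : ℂ) + (s : ℂ) * Complex.exp ((α : ℂ) * Complex.I))‖ := by
  have hσ : 0 < Real.sin α := Real.sin_pos_of_pos_of_lt_pi hα.1 hα.2
  set w : ℂ := (u : ℂ) - ((a : ℂ) + (s : ℂ) * Complex.exp ((α : ℂ) * Complex.I)) with hw
  have hre : w.re = (u - a) - s * Real.cos α := by
    simp [hw, Complex.exp_mul_I, Complex.cos_ofReal_re, Complex.sin_ofReal_re,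
      Complex.cos_ofReal_im, Complex.sin_ofReal_im]
    ring
  have him : w.im = -(s * Real.sin α) := by
    simp [hw, Complex.exp_mul_I, Complex.cos_ofReal_re, Complex.sin_ofReal_re,
      Complex.cos_ofReal_im, Complex.sin_ofReal_im]
  have habs : ‖w‖ = Real.sqrt (((u - a) - s * Real.cos α)^2 + (s * Real.sin α)^2) := by
    rw [Complex.norm_def, Complex.normSq_apply, hre, him]
    ring_nf
  rw [habs]
  rw [show Real.sin α / 2 * (s + |u - a|) = Real.sqrt ((Real.sin α / 2 * (s + |u - a|))^2) by
    rw [Real.sqrt_sq (by positivity)]]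
  apply Real.sqrt_le_sqrt
  have hpyth := Real.sin_sq_add_cos_sq α
  have habs2 : |u - a|^2 = (u - a)^2 := sq_abs _
  have habsnn : 0 ≤ |u - a| := abs_nonneg _
  have h1 : Real.sin α ^ 2 ≤ 1 := by nlinarith [sq_nonneg (Real.cos α)]
  have hQ : Real.sin α ^2/2 * ((u-a)^2 + s^2)
      ≤ ((u - a) - s * Real.cos α)^2 + (s * Real.sin α)^2 := by
    nlinarith [sq_nonneg ((1 - Real.sin α ^2/2)*(u - a) - Real.cos α * s),
      sq_nonneg (Real.sin α ^ 2 * s), h1]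
  nlinarith [hQ, sq_nonneg (Real.sin α * (s - |u - a|)), habs2]

/-- The Cauchy transform `(Ch)(z) = (1/(2πi)) ∫_ℝ h(u)/(u − z) du`. -/
noncomputable def cauchyT (h : ℝ → ℂ) (z : ℂ) : ℂ :=
  (1 / (2 * (Real.pi : ℂ) * Complex.I)) * ∫ u : ℝ, h u / ((u : ℂ) - z)

private lemma main_est {α : ℝ} (hα : α ∈ Set.Ioo 0 Real.pi) (a : ℝ) (g : ℝ → ℂ)
    (hgm : Measurable g) :
    ∫⁻ s in Ioi (0:ℝ),
        (‖cauchyT g ((a : ℂ) + (s : ℂ) * Complex.exp ((α : ℂ) * Complex.I))‖₊ : ℝ≥0∞) ^ (2:ℝ)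
      ≤ ENNReal.ofReal ((((2*Real.pi)⁻¹ * (2/Real.sin α))^2) * 32)
          * ∫⁻ u : ℝ, (‖g u‖₊ : ℝ≥0∞) ^ (2:ℝ) := by
  have hσ : 0 < Real.sin α := Real.sin_pos_of_pos_of_lt_pi hα.1 hα.2
  set σ := Real.sin α with hσdef
  set c₁r : ℝ := (2*Real.pi)⁻¹ * (2/σ) with hc₁r
  have hc₁rpos : 0 < c₁r := by positivity
  set z : ℝ → ℂ := fun s => (a : ℂ) + (s : ℂ) * Complex.exp ((α : ℂ) * Complex.I) with hz
  set Hu : ℝ → ℝ≥0∞ := fun u => (‖g u‖₊ : ℝ≥0∞) with hHu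
  set W : ℝ → ℝ≥0∞ := fun v => (ENNReal.ofReal |v|) ^ (-(1/2) : ℝ) with hW
  set G : ℝ → ℝ → ℝ≥0∞ := fun s u => (ENNReal.ofReal (|u - a| + s))⁻¹ with hG
  have hHm : Measurable Hu := hgm.enorm
  have hWm : Measurable W := (ENNReal.measurable_ofReal.comp measurable_norm).pow_const _
  -- basic facts about W
  have hW0 : ∀ v : ℝ, W v ≠ 0 := by
    intro v
    simp only [hW, ne_eq, ENNReal.rpow_eq_zero_iff]
    push_neg
    constructor
    · intro _; norm_num
    · intro h'; exact absurd h' ENNReal.ofReal_ne_top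
  have hWtop : ∀ v : ℝ, v ≠ 0 → W v ≠ ∞ := by
    intro v hv
    simp only [hW, ne_eq, ENNReal.rpow_eq_top_iff]
    push_neg
    constructor
    · intro h'; exact absurd (ENNReal.ofReal_eq_zero.mp h') (not_le.mpr (abs_pos.mpr hv))
    · intro _; norm_num
  have hWval : ∀ v : ℝ, v ≠ 0 → W v = ENNReal.ofReal (1 / Real.sqrt |v|) := by
    intro v hv
    have h0 : 0 < |v| := abs_pos.mpr hv
    simp only [hW]
    rw [ENNReal.ofReal_rpow_of_pos h0]
    congr 1
    rw [Real.rpow_neg h0.le, ← Real.sqrt_eq_rpow, one_div]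
  have hae : ∀ᵐ u : ℝ, u ≠ a := by
    rw [ae_iff]
    convert Real.volume_singleton (a := a) using 2
    ext u; simp
  -- Step A: pointwise bound on the Cauchy transform
  have stepA : ∀ s : ℝ, 0 < s →
      (‖cauchyT g (z s)‖₊ : ℝ≥0∞) ≤ ENNReal.ofReal c₁r * ∫⁻ u : ℝ, Hu u * G s u := by
    intro s hs
    have hnorm : ∀ u : ℝ, (‖g u / ((u:ℂ) - z s)‖₊ : ℝ≥0∞)
        ≤ ENNReal.ofReal (2/σ) * (Hu u * G s u) := by
      intro u
      have hray := ray_lower hα a u hs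
      have hwpos : 0 < ‖(u:ℂ) - z s‖ := lt_of_lt_of_le (by positivity) hray
      have hb : ‖g u / ((u:ℂ) - z s)‖ ≤ ‖g u‖ * ((2/σ) * (|u - a| + s)⁻¹) := by
        rw [norm_div, div_eq_mul_inv]
        gcongr ‖g u‖ * ?_
        have h2 : (2/σ) * (|u - a| + s)⁻¹ = (σ/2 * (s + |u - a|))⁻¹ := by
          rw [mul_inv]
          rw [show s + |u - a| = |u - a| + s from add_comm _ _]
          field_simp
        rw [h2]
        exact inv_anti₀ (by positivity) hray
      calc (‖g u / ((u:ℂ) - z s)‖₊ : ℝ≥0∞)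
          = ENNReal.ofReal ‖g u / ((u:ℂ) - z s)‖ := (ofReal_norm_eq_enorm _).symm
        _ ≤ ENNReal.ofReal (‖g u‖ * ((2/σ) * (|u - a| + s)⁻¹)) := ENNReal.ofReal_le_ofReal hb
        _ = ENNReal.ofReal (2/σ) * (Hu u * G s u) := by
            rw [ENNReal.ofReal_mul (norm_nonneg _), ENNReal.ofReal_mul (by positivity)]
            simp only [hHu, hG]
            rw [ENNReal.ofReal_inv_of_pos (by positivity), ofReal_norm_eq_enorm, enorm_eq_nnnorm]
            ring
    have hc : (‖(1 / (2 * (Real.pi:ℂ) * Complex.I))‖₊ : ℝ≥0∞) = ENNReal.ofReal (2*Real.pi)⁻¹ := by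
      rw [← enorm_eq_nnnorm, ← ofReal_norm_eq_enorm]
      congr 1
      simp [map_div₀, map_mul, Complex.norm_I, Complex.norm_real,
        abs_of_pos Real.pi_pos, one_div]
    calc (‖cauchyT g (z s)‖₊ : ℝ≥0∞)
        = (‖(1 / (2 * (Real.pi:ℂ) * Complex.I))‖₊ : ℝ≥0∞)
            * (‖∫ u : ℝ, g u / ((u:ℂ) - z s)‖₊ : ℝ≥0∞) := by
          rw [cauchyT, nnnorm_mul, ENNReal.coe_mul]
      _ ≤ ENNReal.ofReal (2*Real.pi)⁻¹ * ∫⁻ u : ℝ, (‖g u / ((u:ℂ) - z s)‖₊ : ℝ≥0∞) := by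
          rw [hc]; gcongr; exact enorm_integral_le_lintegral_enorm _
      _ ≤ ENNReal.ofReal (2*Real.pi)⁻¹ * ∫⁻ u : ℝ, ENNReal.ofReal (2/σ) * (Hu u * G s u) := by
          gcongr with u; exact hnorm u
      _ = ENNReal.ofReal (2*Real.pi)⁻¹ * (ENNReal.ofReal (2/σ) * ∫⁻ u : ℝ, Hu u * G s u) := by
          rw [lintegral_const_mul' _ _ ENNReal.ofReal_ne_top]
      _ = ENNReal.ofReal c₁r * ∫⁻ u : ℝ, Hu u * G s u := by
          rw [← mul_assoc, ← ENNReal.ofReal_mul (by positivity), hc₁r]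
  -- Step B : Hölder
  have stepB : ∀ s : ℝ, 0 < s →
      (∫⁻ u : ℝ, Hu u * G s u) ^ (2:ℝ)
        ≤ (∫⁻ u : ℝ, W (u - a) * G s u)
            * ∫⁻ u : ℝ, Hu u ^ (2:ℝ) * (W (u - a))⁻¹ * G s u := by
    intro s hs
    set f1 : ℝ → ℝ≥0∞ := fun u => (W (u - a) * G s u) ^ ((1:ℝ)/2) with hf1
    set f2 : ℝ → ℝ≥0∞ := fun u => (Hu u ^ (2:ℝ) * (W (u - a))⁻¹ * G s u) ^ ((1:ℝ)/2) with hf2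
    have hGm : Measurable (G s) := by
      apply Measurable.inv
      exact ENNReal.measurable_ofReal.comp ((measurable_id.sub_const a).norm.add_const s)
    have hf1m : Measurable f1 := ((hWm.comp (measurable_id.sub_const a)).mul hGm).pow_const _
    have hf2m : Measurable f2 :=
      (((hHm.pow_const _).mul ((hWm.comp (measurable_id.sub_const a)).inv)).mul hGm).pow_const _
    have h2R : ∀ x : ℝ≥0∞, x ^ (2:ℝ) = x * x := fun x => by
      rw [show (2:ℝ) = ((2:ℕ):ℝ) by norm_num, ENNReal.rpow_natCast, pow_two]
    have hpt : ∀ u : ℝ, u ≠ a → Hu u * G s u = f1 u * f2 u := by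
      intro u hu
      have hWne : W (u - a) ≠ 0 := hW0 _
      have hWne' : W (u - a) ≠ ∞ := hWtop _ (sub_ne_zero.mpr hu)
      have hww : W (u - a) * (W (u - a))⁻¹ = 1 := ENNReal.mul_inv_cancel hWne hWne'
      simp only [hf1, hf2]
      rw [← ENNReal.mul_rpow_of_nonneg _ _ (by norm_num : (0:ℝ) ≤ 1/2)]
      have hinner : W (u - a) * G s u * (Hu u ^ (2:ℝ) * (W (u - a))⁻¹ * G s u)
          = (Hu u * G s u) ^ (2:ℝ) := by
        rw [h2R (Hu u), h2R (Hu u * G s u)]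
        calc W (u-a) * G s u * (Hu u * Hu u * (W (u-a))⁻¹ * G s u)
            = (W (u-a) * (W (u-a))⁻¹) * (Hu u * G s u * (Hu u * G s u)) := by ring
          _ = Hu u * G s u * (Hu u * G s u) := by rw [hww, one_mul]
      rw [hinner, ← ENNReal.rpow_mul]
      norm_num
    have hf1sq : ∀ u : ℝ, f1 u ^ (2:ℝ) = W (u - a) * G s u := by
      intro u
      simp only [hf1]
      rw [← ENNReal.rpow_mul, show (1:ℝ)/2*2 = 1 by norm_num, ENNReal.rpow_one]
    have hf2sq : ∀ u : ℝ, f2 u ^ (2:ℝ) = Hu u ^ (2:ℝ) * (W (u - a))⁻¹ * G s u := by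
      intro u
      simp only [hf2]
      rw [← ENNReal.rpow_mul, show (1:ℝ)/2*2 = 1 by norm_num, ENNReal.rpow_one]
    have hH := ENNReal.lintegral_mul_le_Lp_mul_Lq volume
      Real.HolderConjugate.two_two
      hf1m.aemeasurable hf2m.aemeasurable
    have hle : ∫⁻ u : ℝ, Hu u * G s u
        ≤ (∫⁻ u : ℝ, W (u - a) * G s u) ^ ((1:ℝ)/2)
            * (∫⁻ u : ℝ, Hu u ^ (2:ℝ) * (W (u - a))⁻¹ * G s u) ^ ((1:ℝ)/2) := by
      have he : ∫⁻ u : ℝ, Hu u * G s u = ∫⁻ u : ℝ, (f1 * f2) u := by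
        refine lintegral_congr_ae ?_
        filter_upwards [hae] with u hu
        exact hpt u hu
      rw [he]
      refine hH.trans_eq ?_
      congr 1
      · congr 1
        exact lintegral_congr hf1sq
      · congr 1
        exact lintegral_congr hf2sq
    calc (∫⁻ u : ℝ, Hu u * G s u) ^ (2:ℝ)
        ≤ ((∫⁻ u : ℝ, W (u - a) * G s u) ^ ((1:ℝ)/2)
            * (∫⁻ u : ℝ, Hu u ^ (2:ℝ) * (W (u - a))⁻¹ * G s u) ^ ((1:ℝ)/2)) ^ (2:ℝ) :=
          ENNReal.rpow_le_rpow hle (by norm_num)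
      _ = (∫⁻ u : ℝ, W (u - a) * G s u)
            * ∫⁻ u : ℝ, Hu u ^ (2:ℝ) * (W (u - a))⁻¹ * G s u := by
          rw [ENNReal.mul_rpow_of_nonneg _ _ (by norm_num : (0:ℝ) ≤ 2),
            ← ENNReal.rpow_mul, ← ENNReal.rpow_mul]
          norm_num
  -- estimate of the weight integral in u
  have aux_ne_top : ∀ {x : ℝ}, 0 < x → (ENNReal.ofReal x) ^ (-(1/2):ℝ) ≠ ∞ := by
    intro x hx
    rw [ne_eq, ENNReal.rpow_eq_top_iff]
    push_neg
    constructor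
    · intro h'; exact absurd (ENNReal.ofReal_eq_zero.mp h') (not_le.mpr hx)
    · intro h'; exact absurd h' ENNReal.ofReal_ne_top
  have hofReal_inv_sqrt : ∀ {x : ℝ}, 0 < x →
      ENNReal.ofReal (1 / Real.sqrt x) = (ENNReal.ofReal x) ^ (-(1/2):ℝ) := by
    intro x hx
    rw [ENNReal.ofReal_rpow_of_pos hx]
    congr 1
    rw [Real.rpow_neg hx.le, ← Real.sqrt_eq_rpow, one_div]
  have stepAB : ∀ s : ℝ, 0 < s →
      ∫⁻ u : ℝ, W (u - a) * G s u
        ≤ ENNReal.ofReal 8 * (ENNReal.ofReal s) ^ (-(1/2):ℝ) := by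
    intro s hs
    have htrans : ∫⁻ u : ℝ, W (u - a) * G s u
        = ∫⁻ v : ℝ, W v * (ENNReal.ofReal (|v| + s))⁻¹ := by
      simp only [hG]
      simp_rw [sub_eq_add_neg]
      exact lintegral_add_right_eq_self (fun v => W v * (ENNReal.ofReal (|v| + s))⁻¹) (-a)
    rw [htrans]
    refine le_trans (abs_int hs) ?_
    rw [show (8:ℝ) / Real.sqrt s = 8 * (1 / Real.sqrt s) by ring,
      ENNReal.ofReal_mul (by norm_num), hofReal_inv_sqrt hs]
  -- bound on the inner s-integral
  have stepKey : ∀ u : ℝ, u ≠ a →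
      ∫⁻ s in Ioi (0:ℝ), (ENNReal.ofReal s) ^ (-(1/2):ℝ) * G s u
        ≤ ENNReal.ofReal 4 * W (u - a) := by
    intro u hu
    have hv : 0 < |u - a| := abs_pos.mpr (sub_ne_zero.mpr hu)
    have : ∫⁻ s in Ioi (0:ℝ), (ENNReal.ofReal s) ^ (-(1/2):ℝ) * G s u
        = ∫⁻ s in Ioi (0:ℝ), (ENNReal.ofReal s) ^ (-(1/2):ℝ)
            * (ENNReal.ofReal (s + |u - a|))⁻¹ := by
      simp only [hG]
      simp_rw [add_comm |u - a|]
    rw [this]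
    refine le_trans (key_int hv) ?_
    rw [show (4:ℝ) / Real.sqrt |u - a| = 4 * (1 / Real.sqrt |u - a|) by ring,
      ENNReal.ofReal_mul (by norm_num), hofReal_inv_sqrt hv, hWval _ (sub_ne_zero.mpr hu),
      hofReal_inv_sqrt hv]
  -- the swap argument
  have hswap : ∫⁻ s in Ioi (0:ℝ), (ENNReal.ofReal s) ^ (-(1/2):ℝ)
        * ∫⁻ u : ℝ, Hu u ^ (2:ℝ) * (W (u - a))⁻¹ * G s u
      ≤ ENNReal.ofReal 4 * ∫⁻ u : ℝ, Hu u ^ (2:ℝ) := by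
    have hΨm : Measurable (Function.uncurry fun s u : ℝ =>
        (ENNReal.ofReal s) ^ (-(1/2):ℝ)
          * (Hu u ^ (2:ℝ) * (W (u - a))⁻¹ * G s u)) := by
      apply Measurable.mul
      · exact (ENNReal.measurable_ofReal.comp measurable_fst).pow_const _
      · apply Measurable.mul
        · apply Measurable.mul
          · exact ((hHm.comp measurable_snd).pow_const _)
          · exact ((hWm.comp (measurable_snd.sub_const a))).inv
        · simp only [hG]
          exact (ENNReal.measurable_ofReal.comp
            ((measurable_snd.sub_const a).norm.add measurable_fst)).inv
    have hrw : ∫⁻ s in Ioi (0:ℝ), (ENNReal.ofReal s) ^ (-(1/2):ℝ)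
          * ∫⁻ u : ℝ, Hu u ^ (2:ℝ) * (W (u - a))⁻¹ * G s u
        = ∫⁻ s in Ioi (0:ℝ), ∫⁻ u : ℝ, (ENNReal.ofReal s) ^ (-(1/2):ℝ)
            * (Hu u ^ (2:ℝ) * (W (u - a))⁻¹ * G s u) := by
      refine setLIntegral_congr_fun measurableSet_Ioi ?_
      intro s hs
      exact (lintegral_const_mul' _ _ (aux_ne_top hs)).symm
    rw [hrw, lintegral_lintegral_swap hΨm.aemeasurable]
    have hinner : ∀ u : ℝ, u ≠ a →
        ∫⁻ s in Ioi (0:ℝ), (ENNReal.ofReal s) ^ (-(1/2):ℝ)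
            * (Hu u ^ (2:ℝ) * (W (u - a))⁻¹ * G s u)
          ≤ ENNReal.ofReal 4 * Hu u ^ (2:ℝ) := by
      intro u hu
      have hcne : Hu u ^ (2:ℝ) * (W (u - a))⁻¹ ≠ ∞ := by
        apply ENNReal.mul_ne_top
        · exact ENNReal.rpow_ne_top_of_nonneg (by norm_num) ENNReal.coe_ne_top
        · exact ENNReal.inv_ne_top.mpr (hW0 _)
      have : ∫⁻ s in Ioi (0:ℝ), (ENNReal.ofReal s) ^ (-(1/2):ℝ)
            * (Hu u ^ (2:ℝ) * (W (u - a))⁻¹ * G s u)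
          = (Hu u ^ (2:ℝ) * (W (u - a))⁻¹)
            * ∫⁻ s in Ioi (0:ℝ), (ENNReal.ofReal s) ^ (-(1/2):ℝ) * G s u := by
        rw [← lintegral_const_mul' _ _ hcne]
        congr 1
        funext s
        ring
      rw [this]
      calc (Hu u ^ (2:ℝ) * (W (u - a))⁻¹)
            * ∫⁻ s in Ioi (0:ℝ), (ENNReal.ofReal s) ^ (-(1/2):ℝ) * G s u
          ≤ (Hu u ^ (2:ℝ) * (W (u - a))⁻¹) * (ENNReal.ofReal 4 * W (u - a)) := by
            gcongr
            exact stepKey u hu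
        _ = ENNReal.ofReal 4 * Hu u ^ (2:ℝ) * ((W (u - a))⁻¹ * W (u - a)) := by ring
        _ = ENNReal.ofReal 4 * Hu u ^ (2:ℝ) := by
            rw [ENNReal.inv_mul_cancel (hW0 _) (hWtop _ (sub_ne_zero.mpr hu)), mul_one]
    calc ∫⁻ u : ℝ, ∫⁻ s in Ioi (0:ℝ), (ENNReal.ofReal s) ^ (-(1/2):ℝ)
            * (Hu u ^ (2:ℝ) * (W (u - a))⁻¹ * G s u)
        ≤ ∫⁻ u : ℝ, ENNReal.ofReal 4 * Hu u ^ (2:ℝ) := by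
          refine lintegral_mono_ae ?_
          filter_upwards [hae] with u hu
          exact hinner u hu
      _ = ENNReal.ofReal 4 * ∫⁻ u : ℝ, Hu u ^ (2:ℝ) :=
          lintegral_const_mul' _ _ ENNReal.ofReal_ne_top
  -- final assembly
  calc ∫⁻ s in Ioi (0:ℝ), (‖cauchyT g (z s)‖₊ : ℝ≥0∞) ^ (2:ℝ)
      ≤ ∫⁻ s in Ioi (0:ℝ), ENNReal.ofReal (c₁r^2 * 8)
          * ((ENNReal.ofReal s) ^ (-(1/2):ℝ)
            * ∫⁻ u : ℝ, Hu u ^ (2:ℝ) * (W (u - a))⁻¹ * G s u) := by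
        refine lintegral_mono_ae ?_
        filter_upwards [ae_restrict_mem measurableSet_Ioi] with s hs
        calc ((‖cauchyT g (z s)‖₊ : ℝ≥0∞)) ^ (2:ℝ)
            ≤ (ENNReal.ofReal c₁r * ∫⁻ u : ℝ, Hu u * G s u) ^ (2:ℝ) :=
              ENNReal.rpow_le_rpow (stepA s hs) (by norm_num)
          _ = ENNReal.ofReal c₁r ^ (2:ℝ) * (∫⁻ u : ℝ, Hu u * G s u) ^ (2:ℝ) :=
              ENNReal.mul_rpow_of_nonneg _ _ (by norm_num)
          _ ≤ ENNReal.ofReal c₁r ^ (2:ℝ)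
                * ((∫⁻ u : ℝ, W (u - a) * G s u)
                  * ∫⁻ u : ℝ, Hu u ^ (2:ℝ) * (W (u - a))⁻¹ * G s u) := by
              gcongr
              exact stepB s hs
          _ ≤ ENNReal.ofReal c₁r ^ (2:ℝ)
                * ((ENNReal.ofReal 8 * (ENNReal.ofReal s) ^ (-(1/2):ℝ))
                  * ∫⁻ u : ℝ, Hu u ^ (2:ℝ) * (W (u - a))⁻¹ * G s u) := by
              gcongr
              exact stepAB s hs
          _ = ENNReal.ofReal (c₁r^2 * 8)
                * ((ENNReal.ofReal s) ^ (-(1/2):ℝ)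
                  * ∫⁻ u : ℝ, Hu u ^ (2:ℝ) * (W (u - a))⁻¹ * G s u) := by
              rw [ENNReal.ofReal_mul (by positivity : (0:ℝ) ≤ c₁r^2)]
              rw [show ENNReal.ofReal c₁r ^ (2:ℝ) = ENNReal.ofReal (c₁r^2) by
                rw [ENNReal.ofReal_rpow_of_pos hc₁rpos]
                congr 1
                rw [show (2:ℝ) = ((2:ℕ):ℝ) by norm_num, Real.rpow_natCast]]
              ring
    _ = ENNReal.ofReal (c₁r^2 * 8)
          * ∫⁻ s in Ioi (0:ℝ), (ENNReal.ofReal s) ^ (-(1/2):ℝ)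
            * ∫⁻ u : ℝ, Hu u ^ (2:ℝ) * (W (u - a))⁻¹ * G s u :=
        lintegral_const_mul' _ _ ENNReal.ofReal_ne_top
    _ ≤ ENNReal.ofReal (c₁r^2 * 8) * (ENNReal.ofReal 4 * ∫⁻ u : ℝ, Hu u ^ (2:ℝ)) :=
        mul_le_mul_right hswap _
    _ = ENNReal.ofReal (c₁r^2 * 32) * ∫⁻ u : ℝ, Hu u ^ (2:ℝ) := by
        rw [← mul_assoc, ← ENNReal.ofReal_mul (by positivity)]
        congr 1
        ring

/-- Carleson-type embedding for rays: for every `α ∈ (0, π)` there is `C(α)` such that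
for every base point `a ∈ ℝ` and every `h ∈ L²(ℝ)`,
`(∫₀^∞ |(Ch)(a + s e^{iα})|² ds)^{1/2} ≤ C(α) ‖h‖_{L²}`. -/
theorem stmt5 (α : ℝ) (hα : α ∈ Set.Ioo 0 Real.pi) :
    ∃ C : ℝ, 0 < C ∧
      ∀ (a : ℝ) (h : ℝ → ℂ), MemLp h 2 volume →
        eLpNorm
            (fun s : ℝ =>
              cauchyT h ((a : ℂ) + (s : ℂ) * Complex.exp ((α : ℂ) * Complex.I)))
            2 (volume.restrict (Set.Ioi 0))
          ≤ ENNReal.ofReal C * eLpNorm h 2 volume := by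
  have hσ : 0 < Real.sin α := Real.sin_pos_of_pos_of_lt_pi hα.1 hα.2
  set K : ℝ := (((2*Real.pi)⁻¹ * (2/Real.sin α))^2) * 32 with hK
  have hKpos : 0 < K := by positivity
  refine ⟨Real.sqrt K, Real.sqrt_pos.mpr hKpos, ?_⟩
  intro a h hh
  obtain ⟨g, hgsm, hhg⟩ := hh.1
  have hge : eLpNorm h 2 volume = eLpNorm g 2 volume := eLpNorm_congr_ae hhg
  have hfe : (fun s : ℝ =>
        cauchyT h ((a : ℂ) + (s : ℂ) * Complex.exp ((α : ℂ) * Complex.I)))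
      = fun s : ℝ =>
        cauchyT g ((a : ℂ) + (s : ℂ) * Complex.exp ((α : ℂ) * Complex.I)) := by
    funext s
    simp only [cauchyT]
    congr 1
    exact integral_congr_ae (hhg.mono fun u hu => by simp only []; rw [hu])
  rw [hfe, hge]
  have hkey := main_est hα a g hgsm.measurable
  rw [eLpNorm_eq_lintegral_rpow_enorm_toReal (by norm_num) ENNReal.ofNat_ne_top,
      eLpNorm_eq_lintegral_rpow_enorm_toReal (by norm_num) ENNReal.ofNat_ne_top]
  simp only [ENNReal.toReal_ofNat]
  calc (∫⁻ s in Ioi (0:ℝ),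
          (‖cauchyT g ((a : ℂ) + (s : ℂ) * Complex.exp ((α : ℂ) * Complex.I))‖₊ : ℝ≥0∞)
            ^ (2:ℝ)) ^ ((1:ℝ)/2)
      ≤ (ENNReal.ofReal K * ∫⁻ u : ℝ, (‖g u‖₊ : ℝ≥0∞) ^ (2:ℝ)) ^ ((1:ℝ)/2) :=
        ENNReal.rpow_le_rpow hkey (by norm_num)
    _ = ENNReal.ofReal (Real.sqrt K) * (∫⁻ u : ℝ, (‖g u‖₊ : ℝ≥0∞) ^ (2:ℝ)) ^ ((1:ℝ)/2) := by
        rw [ENNReal.mul_rpow_of_nonneg _ _ (by norm_num : (0:ℝ) ≤ 1/2)]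
        congr 1
        rw [ENNReal.ofReal_rpow_of_pos hKpos]
        congr 1
        rw [Real.sqrt_eq_rpow]
end

section
/- Let h ∈ L²(ℝ; ℂ) have a distributional derivative h' ∈ L²(ℝ; ℂ) (so that h has a continuous representative), let λ₀ ∈ ℝ satisfy h(λ₀) = 0, and let c > 0. Then the limit of (Ch)(z) as z → λ₀ with z constrained to the nontangential region {z ∈ ℂ : Im z ≠ 0 and |Re z − λ₀| ≤ c |Im z|} exists; that is, there is L ∈ ℂ such that for every ε > 0 there is δ > 0 with |(Ch)(z) − L| < ε whenever 0 < |z − λ₀| < δ, Im z ≠ 0 and |Re z − λ₀| ≤ c |Im z|. Here (Ch)(z) = (1/(2πi)) ∫_ℝ h(u)/(u − z) du. -/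
open MeasureTheory

open Set in
private lemma aux_int_ker (a b : ℝ) (hb : b ≠ 0) :
    Integrable (fun u : ℝ => ((u - a) ^ 2 + b ^ 2)⁻¹) := by
  have : (fun u : ℝ => ((u - a) ^ 2 + b ^ 2)⁻¹)
      = fun u : ℝ => (b ^ 2)⁻¹ * (1 + ((u - a) / b) ^ 2)⁻¹ := by
    funext u
    rw [← mul_inv]
    congr 1
    field_simp
    ring
  rw [this]
  exact ((integrable_inv_one_add_sq.comp_div hb).comp_sub_right a).const_mul _

private lemma aux_ker_memL2 (z : ℂ) (hz : z.im ≠ 0) :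
    MemLp (fun u : ℝ => ((u : ℂ) - z)⁻¹) 2 volume := by
  have hm : AEStronglyMeasurable (fun u : ℝ => ((u : ℂ) - z)⁻¹) volume :=
    ((Complex.measurable_ofReal.sub measurable_const).inv).aestronglyMeasurable
  rw [memLp_two_iff_integrable_sq_norm hm]
  have : (fun u : ℝ => ‖((u : ℂ) - z)⁻¹‖ ^ 2) = fun u : ℝ => ((u - z.re) ^ 2 + z.im ^ 2)⁻¹ := by
    funext u
    rw [norm_inv, inv_pow, Complex.sq_norm, Complex.normSq_apply]
    simp [Complex.sub_re, Complex.sub_im]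
    ring_nf
  rw [this]
  exact aux_int_ker z.re z.im hz

private lemma aux_int_mul {f g : ℝ → ℂ} (hf : MemLp f 2 volume) (hg : MemLp g 2 volume) :
    Integrable (fun u => f u * g u) volume := by
  have h1 : MemLp (f • g) 1 volume :=
    hg.smul hf
  exact memLp_one_iff_integrable.mp h1

private lemma aux_int_mul_real {f g : ℝ → ℝ} (hf : MemLp f 2 volume) (hg : MemLp g 2 volume) :
    Integrable (fun u => f u * g u) volume := by
  have h1 : MemLp (f • g) 1 volume :=
    hg.smul hf
  exact memLp_one_iff_integrable.mp h1

open Set in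
private lemma aux_setint {h' : ℝ → ℂ} (hh' : MemLp h' 2 volume) (s : Set ℝ)
    (hs : volume s ≠ ⊤) :
    ∫ x in s, ‖h' x‖ ≤ (eLpNorm h' 2 volume).toReal * Real.sqrt (volume s).toReal := by
  have hm : AEStronglyMeasurable h' (volume.restrict s) := hh'.1.restrict
  have e1 : ∫ x in s, ‖h' x‖ = (∫⁻ x, ‖h' x‖ₑ ∂(volume.restrict s)).toReal :=
    integral_norm_eq_lintegral_enorm hm
  have e2 : (∫⁻ x, ‖h' x‖ₑ ∂(volume.restrict s)) = eLpNorm h' 1 (volume.restrict s) :=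
    eLpNorm_one_eq_lintegral_enorm.symm
  have e3 := eLpNorm_le_eLpNorm_mul_rpow_measure_univ (p := 1) (q := 2) (by norm_num) hm
  have hexp : (1 / ENNReal.toReal 1 - 1 / ENNReal.toReal 2) = (1/2 : ℝ) := by norm_num
  rw [hexp, Measure.restrict_apply_univ] at e3
  have e4 : eLpNorm h' 2 (volume.restrict s) ≤ eLpNorm h' 2 volume :=
    eLpNorm_mono_measure h' Measure.restrict_le_self
  have e5 : eLpNorm h' 1 (volume.restrict s) ≤ eLpNorm h' 2 volume * (volume s) ^ (1/2 : ℝ) :=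
    e3.trans (mul_le_mul_left e4 _)
  rw [e1, e2]
  have hfin : eLpNorm h' 2 volume * (volume s) ^ (1/2 : ℝ) ≠ ⊤ :=
    ENNReal.mul_ne_top hh'.2.ne (ENNReal.rpow_lt_top_of_nonneg (by norm_num) hs).ne
  refine (ENNReal.toReal_mono hfin e5).trans ?_
  rw [ENNReal.toReal_mul, ← ENNReal.toReal_rpow, Real.sqrt_eq_rpow]

open Set in
private lemma aux_holder {h h' : ℝ → ℂ} (hh' : MemLp h' 2 volume)
    (hftc : ∀ a b : ℝ, h b - h a = ∫ x in a..b, h' x) {lam0 : ℝ} (h0 : h lam0 = 0) (u : ℝ) :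
    ‖h u‖ ≤ (eLpNorm h' 2 volume).toReal * Real.sqrt |u - lam0| := by
  have e1 : h u = ∫ x in lam0..u, h' x := by
    have := hftc lam0 u
    rwa [h0, sub_zero] at this
  rw [e1]
  refine intervalIntegral.norm_integral_le_integral_norm_uIoc.trans ?_
  have hv : volume (uIoc lam0 u) = ENNReal.ofReal |u - lam0| := by
    rw [uIoc, Real.volume_Ioc, max_sub_min_eq_abs]
  have := aux_setint hh' (uIoc lam0 u) (by rw [hv]; exact ENNReal.ofReal_ne_top)
  rwa [hv, ENNReal.toReal_ofReal (abs_nonneg _)] at this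

open Set in
private lemma aux_sqrtinv (lam0 : ℝ) :
    IntegrableOn (fun u : ℝ => (Real.sqrt |u - lam0|)⁻¹) (Icc (lam0 - 1) (lam0 + 1)) := by
  have b1 : IntervalIntegrable (fun x : ℝ => x ^ (-(1/2) : ℝ)) volume 0 1 :=
    intervalIntegral.intervalIntegrable_rpow' (by norm_num)
  have b2 : IntervalIntegrable (fun x : ℝ => (Real.sqrt |x|)⁻¹) volume 0 1 := by
    rw [intervalIntegrable_iff] at b1 ⊢
    refine b1.congr_fun ?_ measurableSet_uIoc
    intro x hx
    show x ^ (-(1/2) : ℝ) = (Real.sqrt |x|)⁻¹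
    rw [uIoc_of_le (by norm_num : (0:ℝ) ≤ 1)] at hx
    rw [abs_of_pos hx.1, Real.sqrt_eq_rpow, ← Real.rpow_neg_one]
    rw [← Real.rpow_mul hx.1.le]
    norm_num
  have b3 : IntervalIntegrable (fun x : ℝ => (Real.sqrt |x|)⁻¹) volume (-1) 0 := by
    have := (IntervalIntegrable.iff_comp_neg (f := fun x : ℝ => (Real.sqrt |x|)⁻¹) (a := 0) (b := 1)).mp b2
    simpa using this.symm
  have b4 : IntervalIntegrable (fun x : ℝ => (Real.sqrt |x|)⁻¹) volume (-1) 1 := b3.trans b2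
  have b5 := b4.comp_sub_right lam0
  have b6 : IntervalIntegrable (fun x : ℝ => (Real.sqrt |x - lam0|)⁻¹) volume
      (lam0 - 1) (lam0 + 1) := by
    have e1 : -1 + lam0 = lam0 - 1 := by ring
    have e2 : 1 + lam0 = lam0 + 1 := by ring
    rwa [e1, e2] at b5
  rw [intervalIntegrable_iff, uIoc_of_le (by linarith)] at b6
  exact b6.congr_set_ae Ioc_ae_eq_Icc.symm

set_option maxHeartbeats 1000000 in
open Set in
/-- Existence of the nontangential limit of the Cauchy transform at a point where `h`
vanishes: if `h ∈ L²` has a distributional derivative `h' ∈ L²` (encoded by the FTC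
identity, so `h` is the continuous representative), `h(λ₀) = 0` and `c > 0`, then
`(Ch)(z)` converges as `z → λ₀` in the nontangential region
`{z : Im z ≠ 0, |Re z − λ₀| ≤ c |Im z|}`. -/
theorem stmt7 (h h' : ℝ → ℂ) (hh : MemLp h 2 volume) (hh' : MemLp h' 2 volume)
    (hftc : ∀ a b : ℝ, h b - h a = ∫ x in a..b, h' x)
    (lam0 : ℝ) (h0 : h lam0 = 0) (c : ℝ) (hc : 0 < c) :
    ∃ L : ℂ, ∀ ε : ℝ, 0 < ε → ∃ δ : ℝ, 0 < δ ∧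
      ∀ z : ℂ, 0 < ‖z - (lam0 : ℂ)‖ → ‖z - (lam0 : ℂ)‖ < δ →
        z.im ≠ 0 → |z.re - lam0| ≤ c * |z.im| →
        ‖cauchyT h z - L‖ < ε := by
  classical
  set C := (eLpNorm h' 2 volume).toReal with hCdef
  have hC0 : 0 ≤ C := ENNReal.toReal_nonneg
  have key : ∀ u : ℝ, ‖h u‖ ≤ C * Real.sqrt |u - lam0| := fun u => aux_holder hh' hftc h0 u
  -- basic norms
  have habs : ∀ u : ℝ, ‖((u : ℂ) - (lam0 : ℂ))‖ = |u - lam0| := by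
    intro u
    rw [← Complex.ofReal_sub, Complex.norm_real, Real.norm_eq_abs]
  -- integrability of h(u)/(u-z) for nonreal z
  have int_gz : ∀ z : ℂ, z.im ≠ 0 → Integrable (fun u : ℝ => h u / ((u : ℂ) - z)) volume := by
    intro z hz
    have := aux_int_mul hh (aux_ker_memL2 z hz)
    simpa [div_eq_mul_inv] using this
  -- the reference point z₁ = lam0 + i
  set z₁ : ℂ := (lam0 : ℂ) + Complex.I with hz₁
  have hz₁im : z₁.im = 1 := by simp [hz₁]
  have int_g1 : Integrable (fun u : ℝ => h u / ((u : ℂ) - z₁)) volume :=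
    int_gz z₁ (by rw [hz₁im]; norm_num)
  have habs1 : ∀ u : ℝ, ‖(u : ℂ) - z₁‖ = Real.sqrt ((u - lam0) ^ 2 + 1) := by
    intro u
    rw [Complex.norm_def, Complex.normSq_apply]
    have hre : ((u : ℂ) - z₁).re = u - lam0 := by simp [hz₁]
    have him : ((u : ℂ) - z₁).im = -1 := by simp [hz₁]
    rw [hre, him]
    ring_nf
  -- the weight q and the constant A
  set q : ℝ → ℝ := fun u => ((u - lam0) ^ 2 + 1)⁻¹ with hqdef
  have hq_pos : ∀ u, 0 < q u := by
    intro u; rw [hqdef]; positivity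
  have hq_int : Integrable q volume := by
    have := aux_int_ker lam0 1 one_ne_zero
    simpa [hqdef] using this
  have hq_memL2 : MemLp q 2 volume := by
    rw [memLp_two_iff_integrable_sq hq_int.aestronglyMeasurable]
    refine hq_int.mono' (hq_int.aestronglyMeasurable.pow 2) ?_
    refine Filter.Eventually.of_forall fun u => ?_
    have h1 : 0 < q u := hq_pos u
    have h2 : q u ≤ 1 := by
      rw [hqdef]
      rw [inv_le_one_iff₀]
      right
      nlinarith
    rw [Real.norm_eq_abs, abs_of_pos (by positivity)]
    nlinarith
  have int_G : Integrable (fun u => ‖h u‖ * q u) volume :=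
    aux_int_mul_real hh.norm hq_memL2
  set A := ∫ u, ‖h u‖ * q u with hAdef
  have hA0 : 0 ≤ A := integral_nonneg fun u => by positivity
  -- integrability of g0 = h(u)/(u - lam0)
  have hmeas_g0 : AEStronglyMeasurable (fun u : ℝ => h u / ((u : ℂ) - (lam0 : ℂ))) volume := by
    have hk : AEStronglyMeasurable (fun u : ℝ => ((u : ℂ) - (lam0 : ℂ))⁻¹) volume :=
      ((Complex.measurable_ofReal.sub measurable_const).inv).aestronglyMeasurable
    exact (hh.1.mul hk).congr (Filter.Eventually.of_forall fun u => by simp [Pi.mul_apply, div_eq_mul_inv])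
  have int_norm1 : Integrable (fun u : ℝ => ‖h u‖ * ‖(u : ℂ) - z₁‖⁻¹) volume := by
    have := int_g1.norm
    refine this.congr (Filter.Eventually.of_forall fun u => ?_)
    show ‖h u / ((u : ℂ) - z₁)‖ = ‖h u‖ * ‖(u : ℂ) - z₁‖⁻¹
    rw [norm_div, div_eq_mul_inv]
  have int_g0 : Integrable (fun u : ℝ => h u / ((u : ℂ) - (lam0 : ℂ))) volume := by
    have hB : IntegrableOn (fun u : ℝ => h u / ((u : ℂ) - (lam0 : ℂ)))
        (Icc (lam0 - 1) (lam0 + 1)) volume := by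
      refine Integrable.mono' ((aux_sqrtinv lam0).const_mul C) hmeas_g0.restrict
        (Filter.Eventually.of_forall fun u => ?_)
      by_cases hu : u = lam0
      · simp [hu, h0]
      · have hd : 0 < |u - lam0| := abs_pos.mpr (sub_ne_zero.mpr hu)
        have hs : 0 < Real.sqrt |u - lam0| := Real.sqrt_pos.mpr hd
        rw [norm_div, habs, div_le_iff₀ hd]
        calc ‖h u‖ ≤ C * Real.sqrt |u - lam0| := key u
          _ = C * (Real.sqrt |u - lam0|)⁻¹ * |u - lam0| := by
            rw [mul_assoc]
            congr 1
            rw [inv_mul_eq_div, eq_div_iff hs.ne']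
            exact Real.mul_self_sqrt hd.le
    have hBc : IntegrableOn (fun u : ℝ => h u / ((u : ℂ) - (lam0 : ℂ)))
        (Icc (lam0 - 1) (lam0 + 1))ᶜ volume := by
      refine Integrable.mono' ((int_norm1.const_mul (Real.sqrt 2)).integrableOn)
        hmeas_g0.restrict ?_
      rw [ae_restrict_iff' measurableSet_Icc.compl]
      refine Filter.Eventually.of_forall fun u hu => ?_
      have h1 : 1 < |u - lam0| := by
        by_contra hle
        push_neg at hle
        have h2 := abs_le.mp hle
        exact hu (mem_Icc.mpr ⟨by linarith [h2.1], by linarith [h2.2]⟩)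
      have ht0 : (0:ℝ) < |u - lam0| := by linarith
      have hs0 : 0 < Real.sqrt ((u - lam0) ^ 2 + 1) := Real.sqrt_pos.mpr (by positivity)
      have hst : Real.sqrt ((u - lam0) ^ 2 + 1) ≤ Real.sqrt 2 * |u - lam0| := by
        rw [show Real.sqrt 2 * |u - lam0| = Real.sqrt (2 * (u - lam0) ^ 2) by
          rw [Real.sqrt_mul (by norm_num), Real.sqrt_sq_eq_abs]]
        refine Real.sqrt_le_sqrt ?_
        nlinarith [sq_abs (u - lam0)]
      rw [norm_div, habs, habs1]
      calc ‖h u‖ / |u - lam0|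
          = ‖h u‖ * ((Real.sqrt ((u - lam0) ^ 2 + 1))⁻¹
            * (Real.sqrt ((u - lam0) ^ 2 + 1) / |u - lam0|)) := by
            field_simp
        _ ≤ ‖h u‖ * ((Real.sqrt ((u - lam0) ^ 2 + 1))⁻¹ * Real.sqrt 2) := by
            gcongr
            rw [div_le_iff₀ ht0]
            exact hst
        _ = Real.sqrt 2 * (‖h u‖ * (Real.sqrt ((u - lam0) ^ 2 + 1))⁻¹) := by ring
    have := hB.union hBc
    rwa [union_compl_self, integrableOn_univ] at this
  -- absolute continuity of the integral of ‖g0‖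
  have abscont : ∀ e : ℝ, 0 < e → ∃ ρ : ℝ, 0 < ρ ∧ ρ ≤ 1 ∧
      ∫ u in Icc (lam0 - ρ) (lam0 + ρ), ‖h u / ((u : ℂ) - (lam0 : ℂ))‖ ≤ e := by
    intro e he
    obtain ⟨δ', hδ'pos, hδ'⟩ := (memLp_one_iff_integrable.mpr int_g0).eLpNorm_indicator_le
      le_rfl (by norm_num) he
    refine ⟨min 1 (δ' / 4), by positivity, min_le_left _ _, ?_⟩
    set s : Set ℝ := Icc (lam0 - min 1 (δ' / 4)) (lam0 + min 1 (δ' / 4)) with hsdef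
    have hμs : volume s ≤ ENNReal.ofReal δ' := by
      rw [hsdef, Real.volume_Icc]
      apply ENNReal.ofReal_le_ofReal
      have := min_le_right 1 (δ' / 4)
      linarith
    have hkey := hδ' s measurableSet_Icc hμs
    rw [eLpNorm_indicator_eq_eLpNorm_restrict measurableSet_Icc,
      eLpNorm_one_eq_lintegral_enorm] at hkey
    have e1 : ∫ u in s, ‖h u / ((u : ℂ) - (lam0 : ℂ))‖
        = (∫⁻ u in s, ‖h u / ((u : ℂ) - (lam0 : ℂ))‖ₑ).toReal :=
      integral_norm_eq_lintegral_enorm int_g0.aestronglyMeasurable.restrict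
    rw [e1]
    calc (∫⁻ u in s, ‖h u / ((u : ℂ) - (lam0 : ℂ))‖ₑ).toReal
        ≤ (ENNReal.ofReal e).toReal := ENNReal.toReal_mono ENNReal.ofReal_ne_top hkey
      _ = e := ENNReal.toReal_ofReal he.le
  -- the limit value
  refine ⟨(1 / (2 * (Real.pi : ℂ) * Complex.I)) * ∫ u : ℝ, h u / ((u : ℂ) - (lam0 : ℂ)), ?_⟩
  intro ε hε
  set K := Real.sqrt (1 + c ^ 2) with hKdef
  have hK1 : 1 ≤ K := by
    rw [hKdef]
    nlinarith [Real.sq_sqrt (show (0:ℝ) ≤ 1 + c ^ 2 by positivity),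
      Real.sqrt_nonneg (1 + c ^ 2), sq_nonneg c]
  have hK0 : 0 < K := lt_of_lt_of_le one_pos hK1
  obtain ⟨ρ, hρ0, hρ1, hρint⟩ := abscont (ε / (4 * K)) (by positivity)
  set N := Icc (lam0 - ρ) (lam0 + ρ) with hNdef
  have hA1 : (0:ℝ) < A + 1 := by linarith
  have hA1' : A + 1 ≠ 0 := hA1.ne'
  have hδ2pos : 0 < ε / 4 / (2 * (1 + ρ⁻¹ ^ 2) * (A + 1)) :=
    div_pos (by positivity) (mul_pos (by positivity) hA1)
  refine ⟨min (ρ / 2) (ε / 4 / (2 * (1 + ρ⁻¹ ^ 2) * (A + 1))), lt_min (by positivity) hδ2pos, ?_⟩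
  intro z hz0 hzδ him hnt
  set r := ‖z - (lam0 : ℂ)‖ with hrdef
  have hr0 : 0 < r := hz0
  have hrρ : r < ρ / 2 := lt_of_lt_of_le hzδ (min_le_left _ _)
  have hrδ2 : r < ε / 4 / (2 * (1 + ρ⁻¹ ^ 2) * (A + 1)) := lt_of_lt_of_le hzδ (min_le_right _ _)
  -- nontangential: r ≤ K * |z.im|
  have him_lb : r ≤ K * |z.im| := by
    have h1 : r ^ 2 = (z.re - lam0) ^ 2 + z.im ^ 2 := by
      rw [hrdef, Complex.sq_norm, Complex.normSq_apply]
      simp [Complex.sub_re, Complex.sub_im]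
      ring
    have h2 : (z.re - lam0) ^ 2 ≤ c ^ 2 * z.im ^ 2 := by
      have := abs_nonneg (z.re - lam0)
      nlinarith [sq_abs (z.re - lam0), sq_abs z.im, hnt]
    have h3 : r ^ 2 ≤ (K * |z.im|) ^ 2 := by
      have hK2 : K ^ 2 = 1 + c ^ 2 := Real.sq_sqrt (by positivity)
      rw [mul_pow, hK2]
      nlinarith [sq_abs z.im]
    calc r = Real.sqrt (r ^ 2) := (Real.sqrt_sq hr0.le).symm
      _ ≤ Real.sqrt ((K * |z.im|) ^ 2) := Real.sqrt_le_sqrt h3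
      _ = K * |z.im| := Real.sqrt_sq (by positivity)
  -- lower bound for |u - z|
  have hdz_lb : ∀ u : ℝ, r ≤ K * ‖(u : ℂ) - z‖ := by
    intro u
    have h1 : |((u : ℂ) - z).im| ≤ ‖(u : ℂ) - z‖ := Complex.abs_im_le_norm _
    have h2 : ((u : ℂ) - z).im = -z.im := by simp
    have h3 : |z.im| ≤ ‖(u : ℂ) - z‖ := by rw [h2, abs_neg] at h1; exact h1
    calc r ≤ K * |z.im| := him_lb
      _ ≤ K * ‖(u : ℂ) - z‖ := by nlinarith
  have hne_z : ∀ u : ℝ, ((u : ℂ) - z) ≠ 0 := by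
    intro u hu
    apply him
    have : ((u : ℂ) - z).im = 0 := by rw [hu]; rfl
    simpa using this
  -- main estimate
  have int_diff : Integrable
      (fun u : ℝ => h u / ((u : ℂ) - z) - h u / ((u : ℂ) - (lam0 : ℂ))) volume :=
    (int_gz z him).sub int_g0
  -- pointwise bound on all of ℝ (used on N)
  have bdd_N : ∀ u : ℝ, ‖h u / ((u : ℂ) - z) - h u / ((u : ℂ) - (lam0 : ℂ))‖
      ≤ K * ‖h u / ((u : ℂ) - (lam0 : ℂ))‖ := by
    intro u
    by_cases hu : u = lam0
    · simp [hu, h0]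
    · have hb : ((u : ℂ) - (lam0 : ℂ)) ≠ 0 := by
        rw [← Complex.ofReal_sub, Complex.ofReal_ne_zero]
        exact sub_ne_zero.mpr hu
      have ha := hne_z u
      have hid : h u / ((u : ℂ) - z) - h u / ((u : ℂ) - (lam0 : ℂ))
          = h u * ((z - (lam0 : ℂ)) / (((u : ℂ) - z) * ((u : ℂ) - (lam0 : ℂ)))) := by
        field_simp
        ring
      rw [hid, norm_mul, norm_div, norm_mul]
      have hna : 0 < ‖(u : ℂ) - z‖ := norm_pos_iff.mpr ha
      have hnb : 0 < ‖(u : ℂ) - (lam0 : ℂ)‖ := norm_pos_iff.mpr hb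
      have key1 : r / ‖(u : ℂ) - z‖ ≤ K := by
        rw [div_le_iff₀ hna]
        exact hdz_lb u
      calc ‖h u‖ * (‖z - (lam0 : ℂ)‖ / (‖(u : ℂ) - z‖ * ‖(u : ℂ) - (lam0 : ℂ)‖))
          = ‖h u‖ / ‖(u : ℂ) - (lam0 : ℂ)‖ * (‖z - (lam0 : ℂ)‖ / ‖(u : ℂ) - z‖) := by
            ring
        _ ≤ ‖h u‖ / ‖(u : ℂ) - (lam0 : ℂ)‖ * K := by
            rw [show ‖z - (lam0 : ℂ)‖ = r from by rw [hrdef]]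
            exact mul_le_mul_of_nonneg_left key1 (by positivity)
        _ = K * (‖h u‖ / ‖(u : ℂ) - (lam0 : ℂ)‖) := mul_comm _ _
        _ = K * ‖h u / ((u : ℂ) - (lam0 : ℂ))‖ := by rw [norm_div]
  -- pointwise bound off N
  have bdd_Nc : ∀ u ∈ Nᶜ, ‖h u / ((u : ℂ) - z) - h u / ((u : ℂ) - (lam0 : ℂ))‖
      ≤ (A + 1)⁻¹ * (ε / 4) * (‖h u‖ * q u) := by
    intro u hu
    have ht : ρ < |u - lam0| := by
      by_contra hle
      push_neg at hle
      have h2 := abs_le.mp hle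
      exact hu (mem_Icc.mpr ⟨by linarith [h2.1], by linarith [h2.2]⟩)
    have ht0 : (0:ℝ) < |u - lam0| := lt_trans hρ0 ht
    have hu0 : u ≠ lam0 := by
      intro hcon
      rw [hcon, sub_self, abs_zero] at ht
      exact absurd ht (not_lt.mpr hρ0.le)
    have hb : ((u : ℂ) - (lam0 : ℂ)) ≠ 0 := by
      rw [← Complex.ofReal_sub, Complex.ofReal_ne_zero]
      exact sub_ne_zero.mpr hu0
    have ha := hne_z u
    have hid : h u / ((u : ℂ) - z) - h u / ((u : ℂ) - (lam0 : ℂ))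
        = h u * ((z - (lam0 : ℂ)) / (((u : ℂ) - z) * ((u : ℂ) - (lam0 : ℂ)))) := by
      field_simp
      ring
    have hna : 0 < ‖(u : ℂ) - z‖ := norm_pos_iff.mpr ha
    have htri : |u - lam0| ≤ ‖(u : ℂ) - z‖ + r := by
      have hdec : ((u : ℂ) - (lam0 : ℂ)) = ((u : ℂ) - z) + (z - (lam0 : ℂ)) := by ring
      calc |u - lam0| = ‖(u : ℂ) - (lam0 : ℂ)‖ := (habs u).symm
        _ ≤ ‖(u : ℂ) - z‖ + ‖z - (lam0 : ℂ)‖ := by rw [hdec]; exact norm_add_le _ _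
        _ = ‖(u : ℂ) - z‖ + r := by rw [hrdef]
    have har : |u - lam0| / 2 ≤ ‖(u : ℂ) - z‖ := by
      have : r ≤ |u - lam0| / 2 := by linarith
      linarith
    have hq_cmp : ((|u - lam0|) ^ 2)⁻¹ ≤ (1 + ρ⁻¹ ^ 2) * q u := by
      have hqu : q u = ((u - lam0) ^ 2 + 1)⁻¹ := by rw [hqdef]
      rw [hqu, show (u - lam0) ^ 2 = |u - lam0| ^ 2 from (sq_abs (u - lam0)).symm]
      rw [← one_div (|u - lam0| ^ 2), ← one_div (|u - lam0| ^ 2 + 1), mul_one_div,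
        div_le_div_iff₀ (by positivity) (by positivity)]
      have hmul : 1 ≤ ρ⁻¹ * |u - lam0| := by
        rw [← inv_mul_cancel₀ hρ0.ne']
        exact mul_le_mul_of_nonneg_left ht.le (by positivity)
      nlinarith [mul_le_mul hmul hmul zero_le_one (by positivity : (0:ℝ) ≤ ρ⁻¹ * |u - lam0|)]
    have hcoef : 2 * (1 + ρ⁻¹ ^ 2) * r ≤ (A + 1)⁻¹ * (ε / 4) := by
      have hP : (0:ℝ) < 2 * (1 + ρ⁻¹ ^ 2) := by positivity
      have e : 2 * (1 + ρ⁻¹ ^ 2) * (ε / 4 / (2 * (1 + ρ⁻¹ ^ 2) * (A + 1)))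
          = (A + 1)⁻¹ * (ε / 4) := by
        field_simp
      calc 2 * (1 + ρ⁻¹ ^ 2) * r
          ≤ 2 * (1 + ρ⁻¹ ^ 2) * (ε / 4 / (2 * (1 + ρ⁻¹ ^ 2) * (A + 1))) :=
            mul_le_mul_of_nonneg_left hrδ2.le hP.le
        _ = (A + 1)⁻¹ * (ε / 4) := e
    rw [hid, norm_mul, norm_div, norm_mul,
      show ‖z - (lam0 : ℂ)‖ = r from by rw [hrdef], habs]
    calc ‖h u‖ * (r / (‖(u : ℂ) - z‖ * |u - lam0|))
        ≤ ‖h u‖ * (r / ((|u - lam0| / 2) * |u - lam0|)) := by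
          gcongr
        _ = (2 * r) * (‖h u‖ * ((|u - lam0|) ^ 2)⁻¹) := by
          field_simp
        _ ≤ (2 * r) * (‖h u‖ * ((1 + ρ⁻¹ ^ 2) * q u)) := by
          gcongr
        _ = (2 * (1 + ρ⁻¹ ^ 2) * r) * (‖h u‖ * q u) := by ring
        _ ≤ ((A + 1)⁻¹ * (ε / 4)) * (‖h u‖ * q u) :=
          mul_le_mul_of_nonneg_right hcoef (mul_nonneg (norm_nonneg _) (hq_pos u).le)
  -- assemble
  have prefix_le : ‖(1 / (2 * (Real.pi : ℂ) * Complex.I))‖ ≤ 1 := by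
    rw [norm_div, norm_one, norm_mul, norm_mul, Complex.norm_I, Complex.norm_two,
      Complex.norm_real, Real.norm_eq_abs, abs_of_pos Real.pi_pos, mul_one]
    rw [div_le_one (by positivity)]
    nlinarith [Real.pi_gt_three]
  have e0 : cauchyT h z
      - (1 / (2 * (Real.pi : ℂ) * Complex.I)) * ∫ u : ℝ, h u / ((u : ℂ) - (lam0 : ℂ))
      = (1 / (2 * (Real.pi : ℂ) * Complex.I))
        * ∫ u : ℝ, (h u / ((u : ℂ) - z) - h u / ((u : ℂ) - (lam0 : ℂ))) := by
    rw [integral_sub (int_gz z him) int_g0]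
    simp only [cauchyT]
    ring
  have hsplit : ∫ u : ℝ, ‖h u / ((u : ℂ) - z) - h u / ((u : ℂ) - (lam0 : ℂ))‖
      = (∫ u in N, ‖h u / ((u : ℂ) - z) - h u / ((u : ℂ) - (lam0 : ℂ))‖)
      + ∫ u in Nᶜ, ‖h u / ((u : ℂ) - z) - h u / ((u : ℂ) - (lam0 : ℂ))‖ :=
    (integral_add_compl measurableSet_Icc int_diff.norm).symm
  have hNbound : ∫ u in N, ‖h u / ((u : ℂ) - z) - h u / ((u : ℂ) - (lam0 : ℂ))‖ ≤ ε / 4 := by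
    calc ∫ u in N, ‖h u / ((u : ℂ) - z) - h u / ((u : ℂ) - (lam0 : ℂ))‖
        ≤ ∫ u in N, K * ‖h u / ((u : ℂ) - (lam0 : ℂ))‖ :=
          setIntegral_mono_on int_diff.norm.integrableOn
            ((int_g0.norm.const_mul K).integrableOn) measurableSet_Icc
            (fun u _ => bdd_N u)
      _ = K * ∫ u in N, ‖h u / ((u : ℂ) - (lam0 : ℂ))‖ := integral_const_mul _ _
      _ ≤ K * (ε / (4 * K)) := mul_le_mul_of_nonneg_left hρint hK0.le
      _ = ε / 4 := by field_simp
  have hNcbound : ∫ u in Nᶜ, ‖h u / ((u : ℂ) - z) - h u / ((u : ℂ) - (lam0 : ℂ))‖ ≤ ε / 4 := by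
    calc ∫ u in Nᶜ, ‖h u / ((u : ℂ) - z) - h u / ((u : ℂ) - (lam0 : ℂ))‖
        ≤ ∫ u in Nᶜ, ((A + 1)⁻¹ * (ε / 4)) * (‖h u‖ * q u) :=
          setIntegral_mono_on int_diff.norm.integrableOn
            ((int_G.const_mul ((A + 1)⁻¹ * (ε / 4))).integrableOn) measurableSet_Icc.compl bdd_Nc
      _ = ((A + 1)⁻¹ * (ε / 4)) * ∫ u in Nᶜ, ‖h u‖ * q u := integral_const_mul _ _
      _ ≤ ((A + 1)⁻¹ * (ε / 4)) * A := by
          refine mul_le_mul_of_nonneg_left ?_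
            (mul_nonneg (inv_nonneg.mpr hA1.le) (by positivity))
          exact setIntegral_le_integral int_G
            (Filter.Eventually.of_forall fun u => mul_nonneg (norm_nonneg _) (hq_pos u).le)
      _ ≤ ε / 4 := by
          rw [show (A + 1)⁻¹ * (ε / 4) * A = (ε / 4) * (A / (A + 1)) by ring]
          have hfr : A / (A + 1) ≤ 1 := div_le_one_of_le₀ (by linarith) hA1.le
          nlinarith
  have habs_int : ‖(∫ u : ℝ, (h u / ((u : ℂ) - z) - h u / ((u : ℂ) - (lam0 : ℂ))))‖
      ≤ ∫ u : ℝ, ‖h u / ((u : ℂ) - z) - h u / ((u : ℂ) - (lam0 : ℂ))‖ := by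
    exact norm_integral_le_integral_norm _
  rw [e0, norm_mul]
  have hnn : 0 ≤ ∫ u : ℝ, ‖h u / ((u : ℂ) - z) - h u / ((u : ℂ) - (lam0 : ℂ))‖ :=
    integral_nonneg fun u => norm_nonneg _
  calc ‖(1 / (2 * (Real.pi : ℂ) * Complex.I))‖
        * ‖(∫ u : ℝ, (h u / ((u : ℂ) - z) - h u / ((u : ℂ) - (lam0 : ℂ))))‖
      ≤ 1 * ∫ u : ℝ, ‖h u / ((u : ℂ) - z) - h u / ((u : ℂ) - (lam0 : ℂ))‖ :=
        mul_le_mul prefix_le habs_int (by positivity) one_pos.le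
    _ = ∫ u : ℝ, ‖h u / ((u : ℂ) - z) - h u / ((u : ℂ) - (lam0 : ℂ))‖ := one_mul _
    _ = _ + _ := hsplit
    _ ≤ ε / 4 + ε / 4 := add_le_add hNbound hNcbound
    _ < ε := by linarith
end

section
/- For every α ∈ (0, π) and every d > 0 there is a constant C(α, d) such that the following holds. Let λ₀ ∈ ℝ and let h ∈ L²(ℝ; ℂ) ∩ L∞(ℝ; ℂ) satisfy h(u) = 0 for almost every u with |u − λ₀| < d. Then for every point z = λ₀ + s e^{iα} with s > 0, | (1/(2πi)) ∫_ℝ h(u)/(u − z)² du | ≤ C(α, d) ‖h‖_∞ / (1 + |z − λ₀|). (The left-hand side is the complex derivative of the Cauchy transform Ch at z.) -/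
open MeasureTheory

open Real
open scoped ENNReal NNReal

lemma aux_integrable (a : ℝ) (ha : a ≠ 0) :
    Integrable (fun x : ℝ => (a ^ 2 + x ^ 2)⁻¹) := by
  have h1 := (integrable_inv_one_add_sq.comp_mul_left' (inv_ne_zero ha)).const_mul ((a ^ 2)⁻¹)
  convert h1 using 2 with x
  field_simp

lemma aux_integral (a : ℝ) (ha : 0 < a) :
    ∫ x : ℝ, (a ^ 2 + x ^ 2)⁻¹ = Real.pi / a := by
  have h0 := MeasureTheory.Measure.integral_comp_mul_left (fun x : ℝ => (a ^ 2 + x ^ 2)⁻¹) a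
  have h2 : (fun x : ℝ => (a ^ 2 + (a * x) ^ 2)⁻¹)
      = fun x : ℝ => (a ^ 2)⁻¹ * (1 + x ^ 2)⁻¹ := by
    funext x
    rw [← mul_inv]
    congr 1
    ring
  rw [h2] at h0
  rw [integral_const_mul, integral_univ_inv_one_add_sq] at h0
  have := abs_of_pos (inv_pos.mpr ha)
  rw [smul_eq_mul, this] at h0
  field_simp at h0 ⊢
  nlinarith [h0, ha]

lemma aux_normsq (lam0 s α u : ℝ) :
    ‖(u : ℂ) - ((lam0 : ℂ) + (s : ℂ) * Complex.exp ((α : ℂ) * Complex.I))‖ ^ 2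
      = (u - lam0 - s * Real.cos α) ^ 2 + (s * Real.sin α) ^ 2 := by
  rw [Complex.sq_norm, Complex.normSq_apply]
  simp [Complex.exp_mul_I, Complex.cos_ofReal_re, Complex.sin_ofReal_re]
  ring

lemma aux_alg (x p cc aa : ℝ) (hp : p ≠ 0) (hc : cc ≠ 0) (ha : aa ≠ 0) :
    1 / (2 * p) * (x * (4 / cc) * (p / aa)) = 2 * x / cc / aa := by
  field_simp; ring

lemma aux_alg2 (x cc d s : ℝ) (hc : cc ≠ 0) (hd : d ≠ 0) :
    2 / cc * (1 + 1 / d) * x * (d + s) = 2 * x / cc * (d + s + 1 + s / d) := by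
  field_simp; ring


/-- Derivative bound for the Cauchy transform of a bounded function supported away from
`λ₀`: for every `α ∈ (0, π)` and `d > 0` there is `C(α, d)` such that for every `λ₀ ∈ ℝ`
and `h ∈ L² ∩ L∞` vanishing a.e. on `{|u − λ₀| < d}`, along the ray `z = λ₀ + s e^{iα}`,
`|(1/(2πi)) ∫ h(u)/(u − z)² du| ≤ C(α,d) ‖h‖_∞ / (1 + |z − λ₀|)`. -/
theorem stmt8 (α : ℝ) (hα : α ∈ Set.Ioo 0 Real.pi) (d : ℝ) (hd : 0 < d) :
    ∃ C : ℝ, 0 < C ∧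
      ∀ (lam0 : ℝ) (h : ℝ → ℂ),
        MemLp h 2 volume → MemLp h ⊤ volume →
        (∀ᵐ u : ℝ ∂volume, |u - lam0| < d → h u = 0) →
        ∀ s : ℝ, 0 < s →
          norm
              ((1 / (2 * (Real.pi : ℂ) * Complex.I)) *
                ∫ u : ℝ,
                  h u /
                    ((u : ℂ) - ((lam0 : ℂ) + (s : ℂ) * Complex.exp ((α : ℂ) * Complex.I))) ^ 2)
            ≤ C * (eLpNorm h ⊤ volume).toReal /
              (1 +
                norm
                  (((lam0 : ℂ) + (s : ℂ) * Complex.exp ((α : ℂ) * Complex.I)) - (lam0 : ℂ))) := by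
  obtain ⟨hα0, hαπ⟩ := hα
  have hcolt : Real.cos α < 1 := by
    have := Real.cos_lt_cos_of_nonneg_of_le_pi le_rfl hαπ.le hα0
    simpa using this
  have hcogt : -1 < Real.cos α := by
    have := Real.cos_lt_cos_of_nonneg_of_le_pi hα0.le le_rfl hαπ
    simpa using this
  have habs : |Real.cos α| < 1 := abs_lt.mpr ⟨hcogt, hcolt⟩
  set c : ℝ := 1 - |Real.cos α| with hc
  have hcpos : 0 < c := by simp only [hc]; linarith
  refine ⟨(2 / c) * (1 + 1 / d), by positivity, ?_⟩
  intro lam0 h hL2 hLtop hsupp s hs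
  set z : ℂ := (lam0 : ℂ) + (s : ℂ) * Complex.exp ((α : ℂ) * Complex.I) with hz
  set N : ℝ := (eLpNorm h ⊤ volume).toReal with hN
  have hNnonneg : 0 ≤ N := ENNReal.toReal_nonneg
  set a : ℝ := d + s with ha
  have hapos : 0 < a := by simp only [ha]; linarith
  set M : ℝ := N * (4 / c) with hM
  have hMnonneg : 0 ≤ M := by positivity
  clear_value c z N a M
  -- a.e. norm bound on h
  have hbd : ∀ᵐ u : ℝ ∂volume, ‖h u‖ ≤ N := by
    have h1 := enorm_ae_le_eLpNormEssSup h volume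
    have htop : eLpNormEssSup h volume ≠ ⊤ := by
      rw [← eLpNorm_exponent_top]; exact hLtop.2.ne
    filter_upwards [h1] with u hu
    calc ‖h u‖ = (‖h u‖ₑ).toReal := by simp
    _ ≤ N := by rw [hN, eLpNorm_exponent_top]; exact ENNReal.toReal_mono htop hu
  -- pointwise domination
  have hptwise : ∀ᵐ u : ℝ ∂volume,
      ‖h u / ((u : ℂ) - z) ^ 2‖ ≤ M * (a ^ 2 + (u - lam0) ^ 2)⁻¹ := by
    filter_upwards [hbd, hsupp] with u hu h0
    by_cases hcase : |u - lam0| < d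
    · rw [h0 hcase]
      simp only [zero_div, norm_zero]
      positivity
    · push_neg at hcase
      have hkey : ‖(u : ℂ) - z‖ ^ 2
          = (u - lam0 - s * Real.cos α) ^ 2 + (s * Real.sin α) ^ 2 := by
        rw [hz]; exact aux_normsq lam0 s α u
      have hsin : (Real.sin α) ^ 2 = 1 - (Real.cos α) ^ 2 := Real.sin_sq α
      have hkey2 : ‖(u : ℂ) - z‖ ^ 2
          = (u - lam0) ^ 2 - 2 * (u - lam0) * s * Real.cos α + s ^ 2 := by
        rw [hkey, mul_pow, hsin]; ring
      have hineq : c * (a ^ 2 + (u - lam0) ^ 2) ≤ 4 * ‖(u : ℂ) - z‖ ^ 2 := by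
        rw [hkey2]
        have h1 : (u - lam0) * Real.cos α ≤ |u - lam0| * |Real.cos α| := by
          calc (u - lam0) * Real.cos α ≤ |(u - lam0) * Real.cos α| := le_abs_self _
          _ = |u - lam0| * |Real.cos α| := abs_mul _ _
        have h1s : (u - lam0) * Real.cos α * s ≤ |u - lam0| * |Real.cos α| * s :=
          mul_le_mul_of_nonneg_right h1 hs.le
        have h5 : (d + s) ^ 2 ≤ (|u - lam0| + s) ^ 2 := by
          have h6 := abs_nonneg (u - lam0)
          nlinarith [hcase, hs.le, hd.le]
        simp only [hc, ha]
        nlinarith [h1s, sq_abs (u - lam0), sq_nonneg (|u - lam0| - s),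
          mul_nonneg (abs_nonneg (Real.cos α)) (sq_nonneg (|u - lam0| - s)),
          mul_nonneg (sub_nonneg.mpr habs.le) (sub_nonneg.mpr h5),
          mul_nonneg (sub_nonneg.mpr habs.le)
            (by positivity : (0:ℝ) ≤ (|u - lam0|) ^ 2 + 2 * s ^ 2)]
      have hBpos : (0:ℝ) < a ^ 2 + (u - lam0) ^ 2 := by positivity
      have hApos : (0:ℝ) < ‖(u : ℂ) - z‖ ^ 2 := by
        have h7 : (0:ℝ) < c * (a ^ 2 + (u - lam0) ^ 2) / 4 := by positivity
        linarith [hineq]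
      rw [norm_div, norm_pow]
      have hnz : ‖(u : ℂ) - z‖ = ‖(u : ℂ) - z‖ := rfl
      rw [hnz, ← div_eq_mul_inv, div_le_div_iff₀ hApos hBpos]
      have h3 : N * (c * (a ^ 2 + (u - lam0) ^ 2)) ≤ N * (4 * ‖(u : ℂ) - z‖ ^ 2) :=
        mul_le_mul_of_nonneg_left hineq hNnonneg
      have h4 : ‖h u‖ * (a ^ 2 + (u - lam0) ^ 2) ≤ N * (a ^ 2 + (u - lam0) ^ 2) :=
        mul_le_mul_of_nonneg_right hu hBpos.le
      calc ‖h u‖ * (a ^ 2 + (u - lam0) ^ 2) ≤ N * (a ^ 2 + (u - lam0) ^ 2) := h4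
      _ = N * (c * (a ^ 2 + (u - lam0) ^ 2)) / c := by field_simp
      _ ≤ N * (4 * ‖(u : ℂ) - z‖ ^ 2) / c := by gcongr
      _ = M * ‖(u : ℂ) - z‖ ^ 2 := by rw [hM]; field_simp
  have hInt : Integrable (fun u : ℝ => M * (a ^ 2 + (u - lam0) ^ 2)⁻¹) :=
    (Integrable.comp_sub_right (aux_integrable a hapos.ne') lam0).const_mul M
  have hIg : (∫ u : ℝ, M * (a ^ 2 + (u - lam0) ^ 2)⁻¹) = M * (Real.pi / a) := by
    rw [integral_const_mul, integral_sub_right_eq_self (fun x : ℝ => (a ^ 2 + x ^ 2)⁻¹) lam0,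
      aux_integral a hapos]
  have hmain : ‖∫ u : ℝ, h u / ((u : ℂ) - z) ^ 2‖ ≤ M * (Real.pi / a) :=
    hIg ▸ norm_integral_le_of_norm_le hInt hptwise
  have hfac : ‖1 / (2 * (Real.pi : ℂ) * Complex.I)‖ = 1 / (2 * Real.pi) := by
    rw [norm_div, norm_one, norm_mul, norm_mul, Complex.norm_I, Complex.norm_two,
      Complex.norm_real, Real.norm_eq_abs, abs_of_pos Real.pi_pos, mul_one]
  have hzs : ‖z - (lam0 : ℂ)‖ = s := by
    have he : z - (lam0 : ℂ) = (s : ℂ) * Complex.exp ((α : ℂ) * Complex.I) := by rw [hz]; ring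
    rw [he, norm_mul, Complex.norm_real, Real.norm_eq_abs, Complex.norm_exp]
    have : ((α : ℂ) * Complex.I).re = 0 := by simp
    rw [this, Real.exp_zero, mul_one, abs_of_pos hs]
  rw [hzs, norm_mul, hfac]
  calc 1 / (2 * Real.pi) * ‖∫ u : ℝ, h u / ((u : ℂ) - z) ^ 2‖
      ≤ 1 / (2 * Real.pi) * (M * (Real.pi / a)) := by
        apply mul_le_mul_of_nonneg_left _ (by positivity)
        exact hmain
  _ = (2 * N / c) / a := by
        rw [hM]; exact aux_alg N Real.pi c a Real.pi_ne_zero hcpos.ne' hapos.ne'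
  _ ≤ (2 / c) * (1 + 1 / d) * N / (1 + s) := by
        rw [div_le_div_iff₀ hapos (by linarith)]
        have hexp : (2 / c) * (1 + 1 / d) * N * a = 2 * N / c * (d + s + 1 + s / d) := by
          rw [ha]; exact aux_alg2 N c d s hcpos.ne' hd.ne'
        have hsd : 0 ≤ s / d := by positivity
        have h2nc : 0 ≤ 2 * N / c := by positivity
        rw [hexp]
        have : 2 * N / c * (1 + s) ≤ 2 * N / c * (d + s + 1 + s / d) := by
          apply mul_le_mul_of_nonneg_left _ h2nc
          linarith
        linarith
end

section
/- Let j ≥ 1 be an integer, U ⊂ ℝ an open set, θ : U → ℝ a function that is (j+1)-times differentiable on U with θ'(x) > 0 for all x ∈ U, f : U → ℂ a function that is j-times differentiable on U, t > 0 and ξ ≥ 0. Define w := ξ + tθ' on U (so w > 0 on U) and, for a differentiable function g on U, D_w g := (g/w)'. Then there is a constant C(j), depending only on j, such that for every x ∈ U, |(D_w^j f)(x)| ≤ C(j) · t^{−j} · f_{θ,j}(x). -/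
open MeasureTheory Set

/-- The finite set of tuples `(α₁, …, α_k)` of nonnegative integers with
`α₁ + 2α₂ + ⋯ + kα_k = k − β` (each `αᵢ ≤ k` automatically, so the range `k+1` is no
restriction). -/
def tupleSet (k β : ℕ) : Finset (Fin k → ℕ) :=
  (Fintype.piFinset fun _ : Fin k => Finset.range (k + 1)).filter
    (fun a => (∑ i : Fin k, ((i : ℕ) + 1) * a i) = k - β)

/-- The phase-dependent weight
`w_{k,β}(θ)(x) = Σ_α |θ'(x)|^{−(k+α₁+⋯+α_k)} |θ''(x)|^{α₁} ⋯ |θ^{(k+1)}(x)|^{α_k}`,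
expressed through the derivative family `Θ` (`Θ n` is the `n`-th derivative of `θ`). -/
noncomputable def wWeight (Θ : ℕ → ℝ → ℝ) (k β : ℕ) (x : ℝ) : ℝ :=
  ∑ a ∈ tupleSet k β,
    |Θ 1 x| ^ (-((k : ℝ) + ∑ i : Fin k, (a i : ℝ))) *
      ∏ i : Fin k, |Θ ((i : ℕ) + 2) x| ^ (a i)

/-- The weighted sum of derivatives `f_{θ,k}(x) = Σ_{β=0}^{k} |f^{(β)}(x)| w_{k,β}(θ)(x)`,
expressed through the derivative families `Df` and `Θ`. -/
noncomputable def fWeighted (Df : ℕ → ℝ → ℂ) (Θ : ℕ → ℝ → ℝ) (k : ℕ) (x : ℝ) : ℝ :=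
  ∑ β ∈ Finset.range (k + 1), ‖Df β x‖ * wWeight Θ k β x

/-- The operator `D_w g = (g/w)'`. -/
noncomputable def DwOp (w : ℝ → ℝ) (g : ℝ → ℂ) : ℝ → ℂ :=
  deriv (fun x => g x / ((w x : ℝ) : ℂ))

namespace S15

def bumps : List ℕ → List (List ℕ)
  | [] => []
  | n :: l => ((n+1) :: l) :: (bumps l).map (n :: ·)


lemma mem_bumps {ds' ds : List ℕ} (h : ds' ∈ bumps ds) :
    ∃ l1 n l2, ds = l1 ++ n :: l2 ∧ ds' = l1 ++ (n+1) :: l2 := by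
  induction ds generalizing ds' with
  | nil => simp [bumps] at h
  | cons n l ih =>
    simp only [bumps, List.mem_cons, List.mem_map] at h
    rcases h with rfl | ⟨d, hd, rfl⟩
    · exact ⟨[], n, l, rfl, rfl⟩
    · obtain ⟨l1, m, l2, h1, h2⟩ := ih hd
      exact ⟨n :: l1, m, l2, by simp [h1], by simp [h2]⟩


lemma length_bumps (ds : List ℕ) : (bumps ds).length = ds.length := by
  induction ds with
  | nil => rfl
  | cons n l ih => simp [bumps, ih]


lemma norm_list_sum_le {α : Type*} (L : List α) (f : α → ℂ) :
    ‖(L.map f).sum‖ ≤ (L.map fun a => ‖f a‖).sum := by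
  induction L with
  | nil => simp
  | cons a l ih =>
    simp only [List.map_cons, List.sum_cons]
    exact (norm_add_le _ _).trans (by gcongr)


lemma list_sum_le {α : Type*} (L : List α) (f g : α → ℝ) (h : ∀ a ∈ L, f a ≤ g a) :
    (L.map f).sum ≤ (L.map g).sum := by
  induction L with
  | nil => simp
  | cons a l ih =>
    simp only [List.map_cons, List.sum_cons]
    exact add_le_add (h a (by simp)) (ih fun b hb => h b (by simp [hb]))


lemma nat_list_sum_le {α : Type*} (L : List α) (f g : α → ℕ) (h : ∀ a ∈ L, f a ≤ g a) :
    (L.map f).sum ≤ (L.map g).sum := by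
  induction L with
  | nil => simp
  | cons a l ih =>
    simp only [List.map_cons, List.sum_cons]
    exact add_le_add (h a (by simp)) (ih fun b hb => h b (by simp [hb]))


lemma mul_list_sum {α R : Type*} [NonUnitalNonAssocSemiring R] (L : List α) (c : R) (f : α → R) :
    (L.map fun a => c * f a).sum = c * (L.map f).sum := by
  induction L with
  | nil => simp
  | cons a l ih => simp [ih, mul_add]


lemma list_sum_mul {α R : Type*} [NonUnitalNonAssocSemiring R] (L : List α) (c : R) (f : α → R) :
    (L.map fun a => f a * c).sum = (L.map f).sum * c := by
  induction L with
  | nil => simp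
  | cons a l ih => simp [ih, add_mul]


lemma list_sum_div {α : Type*} (L : List α) (d : ℂ) (f : α → ℂ) :
    (L.map f).sum / d = (L.map fun a => f a / d).sum := by
  induction L with
  | nil => simp
  | cons a l ih => simp [add_div, ih]


lemma list_sum_flatMap {α β : Type*} (L : List α) (g : α → List β) (f : β → ℂ) :
    (((L.flatMap g).map f)).sum = (L.map fun a => ((g a).map f).sum).sum := by
  induction L with
  | nil => simp
  | cons a l ih => simp [List.flatMap_cons, ih]


lemma hasDerivAt_list_sum {α : Type*} (L : List α) (F : α → ℝ → ℂ) (F' : α → ℂ) (x : ℝ)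
    (h : ∀ a ∈ L, HasDerivAt (F a) (F' a) x) :
    HasDerivAt (fun y => (L.map (F · y)).sum) ((L.map F').sum) x := by
  induction L with
  | nil => simpa using hasDerivAt_const x (0 : ℂ)
  | cons a l ih =>
    simp only [List.map_cons, List.sum_cons]
    exact (h a (by simp)).add (ih fun b hb => h b (by simp [hb]))


lemma hasDerivAt_list_prod (Θ : ℕ → ℝ → ℝ) (x : ℝ) (ds : List ℕ)
    (h : ∀ n ∈ ds, HasDerivAt (Θ n) (Θ (n+1) x) x) :
    HasDerivAt (fun y => (ds.map fun n => Θ n y).prod)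
      (((bumps ds).map fun d => (d.map fun n => Θ n x).prod).sum) x := by
  induction ds with
  | nil => simpa [bumps] using hasDerivAt_const x (1 : ℝ)
  | cons n l ih =>
    simp only [List.map_cons, List.prod_cons, bumps, List.sum_cons, List.map_map]
    have h1 := (h n (by simp)).mul (ih fun m hm => h m (by simp [hm]))
    refine h1.congr_deriv ?_
    simp only [List.map_cons, List.prod_cons, Function.comp_def]
    rw [← mul_list_sum]




noncomputable def tval (Θ : ℕ → ℝ → ℝ) (Df : ℕ → ℝ → ℂ) (t : ℝ) (w : ℝ → ℝ)
    (m : ℕ) (T : ℤ × ℕ × List ℕ) (x : ℝ) : ℂ :=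
  (T.1 : ℂ) * Df T.2.1 x *
    ((((T.2.2.map fun n => Θ n x).prod * t ^ T.2.2.length / w x ^ (m + T.2.2.length) : ℝ)) : ℂ)


def expand (m : ℕ) (T : ℤ × ℕ × List ℕ) : List (ℤ × ℕ × List ℕ) :=
  (T.1, T.2.1 + 1, T.2.2) ::
    (-(T.1 * (m + T.2.2.length : ℕ)), T.2.1, 2 :: T.2.2) ::
    (bumps T.2.2).map fun d => (T.1, T.2.1, d)


def Lrep : ℕ → List (ℤ × ℕ × List ℕ)
  | 0 => [(1, 0, [])]
  | k+1 => (Lrep k).flatMap (expand (k+1))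


def Good (k : ℕ) (T : ℤ × ℕ × List ℕ) : Prop :=
  T.2.1 + (T.2.2.map (· - 1)).sum = k ∧ ∀ n ∈ T.2.2, 2 ≤ n


lemma len_le_predsum (ds : List ℕ) (h : ∀ n ∈ ds, 2 ≤ n) :
    ds.length ≤ (ds.map (· - 1)).sum := by
  induction ds with
  | nil => simp
  | cons n l ih =>
    simp only [List.map_cons, List.sum_cons, List.length_cons]
    have h1 : 2 ≤ n := h n (by simp)
    have h2 := ih fun m hm => h m (by simp [hm])
    omega


lemma mem_le_predsum (ds : List ℕ) {n : ℕ} (hn : n ∈ ds) :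
    n - 1 ≤ (ds.map (· - 1)).sum := by
  induction ds with
  | nil => simp at hn
  | cons m l ih =>
    simp only [List.map_cons, List.sum_cons]
    rcases List.mem_cons.mp hn with rfl | h
    · omega
    · have := ih h; omega


lemma good_expand {k : ℕ} {T : ℤ × ℕ × List ℕ} (h : Good k T) :
    ∀ T' ∈ expand (k+1) T, Good (k+1) T' := by
  obtain ⟨c, β, ds⟩ := T
  obtain ⟨hsum, hmem⟩ := h
  dsimp only at hsum hmem
  intro T' hT'
  simp only [expand, List.mem_cons, List.mem_map] at hT'
  rcases hT' with rfl | rfl | ⟨d, hd, rfl⟩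
  · exact ⟨by dsimp only; omega, hmem⟩
  · refine ⟨?_, ?_⟩
    · dsimp only
      simp only [List.map_cons, List.sum_cons]
      omega
    · intro n hn
      rcases List.mem_cons.mp hn with rfl | h
      · exact le_rfl
      · exact hmem n h
  · obtain ⟨l1, n, l2, rfl, rfl⟩ := mem_bumps hd
    have hn2 : 2 ≤ n := hmem n (by simp)
    constructor
    · simp only [List.map_append, List.map_cons, List.sum_append, List.sum_cons] at hsum ⊢
      omega
    · intro m hm
      simp only [List.mem_append, List.mem_cons] at hm
      rcases hm with h | rfl | h
      · exact hmem m (by simp [h])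
      · omega
      · exact hmem m (by simp [h])


lemma good_Lrep : ∀ k, ∀ T ∈ Lrep k, Good k T := by
  intro k
  induction k with
  | zero => intro T hT; simp only [Lrep, List.mem_singleton] at hT; subst hT; exact ⟨rfl, by simp⟩
  | succ k ih =>
    intro T hT
    simp only [Lrep, List.mem_flatMap] at hT
    obtain ⟨S, hS, hTS⟩ := hT
    exact good_expand (ih S hS) T hTS


def weight (L : List (ℤ × ℕ × List ℕ)) : ℕ := (L.map fun T => T.1.natAbs).sum


lemma weight_flatMap (L : List (ℤ × ℕ × List ℕ)) (g : _ → List (ℤ × ℕ × List ℕ)) :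
    weight (L.flatMap g) = (L.map fun T => weight (g T)).sum := by
  induction L with
  | nil => rfl
  | cons a l ih =>
    simp only [weight] at ih
    simp [weight, List.flatMap_cons, List.map_append, List.sum_append, List.map_cons,
      List.sum_cons, ih]


lemma weight_expand {j k : ℕ} (hk : k < j) {T : ℤ × ℕ × List ℕ} (h : Good k T) :
    weight (expand (k+1) T) ≤ (3*j+1) * T.1.natAbs := by
  obtain ⟨c, β, ds⟩ := T
  obtain ⟨hsum, hmem⟩ := h
  dsimp only at hsum hmem
  have hlen : ds.length ≤ k := (len_le_predsum ds hmem).trans (by omega)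
  simp only [weight, expand, List.map_cons, List.sum_cons, List.map_map]
  have h1 : (-(c * ((k+1) + ds.length : ℕ))).natAbs = c.natAbs * ((k+1) + ds.length) := by
    rw [Int.natAbs_neg, Int.natAbs_mul, Int.natAbs_natCast]
  have h2 : ((bumps ds).map ((fun T : ℤ × ℕ × List ℕ => T.1.natAbs) ∘ fun d => (c, β, d))).sum
      = ds.length * c.natAbs := by
    simp only [Function.comp_def]
    rw [List.map_const']
    simp [length_bumps]
  rw [h1, h2]
  have : c.natAbs + (c.natAbs * ((k+1) + ds.length) + ds.length * c.natAbs)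
      = (1 + (k+1+ds.length) + ds.length) * c.natAbs := by ring
  rw [this]
  have : 1 + (k+1+ds.length) + ds.length ≤ 3*j+1 := by omega
  exact Nat.mul_le_mul_right _ this


lemma weight_Lrep (j : ℕ) : ∀ k ≤ j, weight (Lrep k) ≤ (3*j+1)^k := by
  intro k
  induction k with
  | zero => intro _; simp [weight, Lrep]
  | succ k ih =>
    intro hk
    rw [Lrep, weight_flatMap]
    calc ((Lrep k).map fun T => weight (expand (k+1) T)).sum
        ≤ ((Lrep k).map fun T => (3*j+1) * T.1.natAbs).sum := by
          refine nat_list_sum_le _ _ _ fun T hT => weight_expand (by omega) (good_Lrep k T hT)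
      _ = (3*j+1) * weight (Lrep k) := mul_list_sum _ _ _
      _ ≤ (3*j+1) * (3*j+1)^k := Nat.mul_le_mul_left _ (ih (by omega))
      _ = (3*j+1)^(k+1) := (pow_succ' _ _).symm


lemma list_prod_count (j : ℕ) (F : ℕ → ℝ) (ds : List ℕ) (h : ∀ n ∈ ds, 2 ≤ n ∧ n ≤ j + 1) :
    (ds.map F).prod = ∏ i ∈ Finset.range j, F (i+2) ^ ds.count (i+2) := by
  induction ds with
  | nil => simp
  | cons n l ih =>
    have hn := h n (by simp)
    rw [List.map_cons, List.prod_cons, ih fun m hm => h m (by simp [hm])]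
    have hc : ∀ i, (n :: l).count (i+2) = l.count (i+2) + if i = n - 2 then 1 else 0 := by
      intro i
      rw [List.count_cons]
      congr 1
      by_cases hi : i = n - 2 <;> simp [hi] <;> omega
    simp only [hc]
    rw [Finset.prod_congr rfl fun i _ => pow_add (F (i+2)) (l.count (i+2)) _,
      Finset.prod_mul_distrib]
    have : ∀ i ∈ Finset.range j, F (i+2) ^ (if i = n - 2 then 1 else 0)
        = if i = n - 2 then F (i+2) else 1 := by
      intro i _; by_cases hi : i = n - 2 <;> simp [hi]
    rw [Finset.prod_congr rfl this, Finset.prod_ite_eq' (Finset.range j) (n-2) fun i => F (i+2)]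
    have hmem : n - 2 ∈ Finset.range j := Finset.mem_range.mpr (by omega)
    rw [if_pos hmem]
    have : n - 2 + 2 = n := by omega
    rw [this, mul_comm]


lemma list_sum_count (j : ℕ) (F : ℕ → ℕ) (ds : List ℕ) (h : ∀ n ∈ ds, 2 ≤ n ∧ n ≤ j + 1) :
    (ds.map F).sum = ∑ i ∈ Finset.range j, ds.count (i+2) * F (i+2) := by
  induction ds with
  | nil => simp
  | cons n l ih =>
    have hn := h n (by simp)
    rw [List.map_cons, List.sum_cons, ih fun m hm => h m (by simp [hm])]
    have hc : ∀ i, (n :: l).count (i+2) = l.count (i+2) + if i = n - 2 then 1 else 0 := by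
      intro i
      rw [List.count_cons]
      congr 1
      by_cases hi : i = n - 2 <;> simp [hi] <;> omega
    simp only [hc, add_mul]
    rw [Finset.sum_add_distrib]
    have : ∀ i ∈ Finset.range j, (if i = n - 2 then 1 else 0) * F (i+2)
        = if i = n - 2 then F (i+2) else 0 := by
      intro i _; by_cases hi : i = n - 2 <;> simp [hi]
    rw [Finset.sum_congr rfl this, Finset.sum_ite_eq' (Finset.range j) (n-2) fun i => F (i+2)]
    have hmem : n - 2 ∈ Finset.range j := Finset.mem_range.mpr (by omega)
    rw [if_pos hmem]
    have h2 : n - 2 + 2 = n := by omega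
    rw [h2, add_comm]




lemma list_cast_sum (L : List (List ℕ)) (C : ℂ) (p : List ℕ → ℝ) (u v : ℝ) :
    (L.map fun d => C * ((p d * u / v : ℝ) : ℂ)).sum = C * (((L.map p).sum * u / v : ℝ) : ℂ) := by
  induction L with
  | nil => simp
  | cons a l ih =>
    simp only [List.map_cons, List.sum_cons, ih]
    push_cast
    ring


lemma hasDerivAt_tval (Θ : ℕ → ℝ → ℝ) (Df : ℕ → ℝ → ℂ) (t : ℝ) (w : ℝ → ℝ)
    {j k : ℕ} (hk : k < j) {x : ℝ}
    (hΘ : ∀ n < j + 1, HasDerivAt (Θ n) (Θ (n + 1) x) x)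
    (hDf : ∀ i < j, HasDerivAt (Df i) (Df (i + 1) x) x)
    (hw : HasDerivAt w (t * Θ 2 x) x) (hw0 : w x ≠ 0)
    {T : ℤ × ℕ × List ℕ} (hT : Good k T) :
    HasDerivAt (fun y => tval Θ Df t w (k+1) T y)
      (((expand (k+1) T).map fun T' => tval Θ Df t w (k+1) T' x).sum) x := by
  obtain ⟨c, β, ds⟩ := T
  obtain ⟨hsum, hmem⟩ := hT
  dsimp only at hsum hmem
  have hβ : β < j := by omega
  have hA : HasDerivAt (fun y => (c : ℂ) * Df β y) ((c:ℂ) * Df (β+1) x) x :=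
    (hDf β hβ).const_mul _
  have hPr : HasDerivAt (fun y => (ds.map fun n => Θ n y).prod)
      (((bumps ds).map fun d => (d.map fun n => Θ n x).prod).sum) x := by
    refine hasDerivAt_list_prod Θ x ds fun n hn => hΘ n ?_
    have h1 := mem_le_predsum ds hn
    have h2 := hmem n hn
    omega
  set s := ds.length with hs
  set Pr : ℝ → ℝ := fun y => (ds.map fun n => Θ n y).prod with hPrdef
  set Sb : ℝ := ((bumps ds).map fun d => (d.map fun n => Θ n x).prod).sum with hSbdef
  set M := k + 1 + s with hMdef
  have hQ : HasDerivAt (fun y => w y ^ M) ((M : ℝ) * w x ^ (M-1) * (t * Θ 2 x)) x := hw.pow M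
  have hR : HasDerivAt (fun y => Pr y * t ^ s / w y ^ M)
      ((Sb * t ^ s * w x ^ M - Pr x * t ^ s * ((M:ℝ) * w x ^ (M-1) * (t * Θ 2 x))) / (w x ^ M) ^ 2)
      x := (hPr.mul_const _).div hQ (pow_ne_zero _ hw0)
  have key := hA.mul hR.ofReal_comp
  have hfun : (fun y => tval Θ Df t w (k+1) (c, β, ds) y)
      = fun y => ((c : ℂ) * Df β y) * ((Pr y * t ^ s / w y ^ M : ℝ) : ℂ) := by
    funext y; simp only [tval, hPrdef, hMdef, hs]
  rw [hfun]
  refine key.congr_deriv ?_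
  -- equality of the two derivative expressions
  have hbump : ((bumps ds).map fun d => tval Θ Df t w (k+1) (c, β, d) x)
      = (bumps ds).map fun d =>
          ((c : ℂ) * Df β x) * (((d.map fun n => Θ n x).prod * t ^ s / w x ^ M : ℝ) : ℂ) := by
    refine List.map_congr_left fun d hd => ?_
    obtain ⟨l1, n, l2, h1, h2⟩ := mem_bumps hd
    have hlen : d.length = s := by rw [h2, hs, h1]; simp
    simp only [tval, hlen, hMdef]
  have hreal : (Sb * t ^ s * w x ^ M - Pr x * t ^ s * ((M:ℝ) * w x ^ (M-1) * (t * Θ 2 x)))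
        / (w x ^ M) ^ 2
      = -(M:ℝ) * (Θ 2 x * Pr x * t ^ (s+1) / w x ^ (M+1)) + Sb * t ^ s / w x ^ M := by
    obtain ⟨N, hN⟩ : ∃ N, M = N + 1 := ⟨k + s, by omega⟩
    rw [hN]
    simp only [Nat.add_sub_cancel]
    field_simp
    ring
  simp only [expand, List.map_cons, List.sum_cons, List.map_map, Function.comp_def]
  rw [hbump, list_cast_sum (bumps ds) ((c:ℂ) * Df β x) (fun d => (d.map fun n => Θ n x).prod)
    (t ^ s) (w x ^ M), hreal]
  simp only [tval, hMdef, hPrdef, hSbdef, hs, List.length_cons, List.map_cons, List.prod_cons]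
  rw [show k + 1 + (ds.length + 1) = (k + 1 + ds.length) + 1 from by omega]
  push_cast
  ring


lemma list_abs_prod (l : List ℝ) : |l.prod| = (l.map fun r => |r|).prod := by
  induction l with
  | nil => simp
  | cons a l ih => simp [abs_mul, ih]


lemma wWeight_nonneg (Θ : ℕ → ℝ → ℝ) (k β : ℕ) (x : ℝ) : 0 ≤ wWeight Θ k β x := by
  refine Finset.sum_nonneg fun a _ => mul_nonneg (Real.rpow_nonneg (abs_nonneg _) _)
    (Finset.prod_nonneg fun i _ => pow_nonneg (abs_nonneg _) _)


lemma rep_eq (j : ℕ) (hj : 1 ≤ j) (U : Set ℝ) (hU : IsOpen U)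
    (Θ : ℕ → ℝ → ℝ) (f : ℝ → ℂ) (Df : ℕ → ℝ → ℂ) (hf : Df 0 = f)
    (hΘ : ∀ n < j + 1, ∀ x ∈ U, HasDerivAt (Θ n) (Θ (n + 1) x) x)
    (hpos : ∀ x ∈ U, 0 < Θ 1 x)
    (hDf : ∀ i < j, ∀ x ∈ U, HasDerivAt (Df i) (Df (i + 1) x) x)
    (t : ℝ) (ht : 0 < t) (ξ : ℝ) (hξ : 0 ≤ ξ) :
    ∀ k, k ≤ j → ∀ x ∈ U,
      (DwOp (fun y => ξ + t * Θ 1 y))^[k] f x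
        = ((Lrep k).map fun T => tval Θ Df t (fun y => ξ + t * Θ 1 y) k T x).sum := by
  intro k
  induction k with
  | zero => intro _ x _; simp [Lrep, tval, hf]
  | succ k ih =>
    intro hk x hx
    set w : ℝ → ℝ := fun y => ξ + t * Θ 1 y with hwdef
    have hwpos : ∀ y ∈ U, 0 < w y := by
      intro y hy
      have h1 := hpos y hy
      simp only [hwdef]
      nlinarith
    rw [Function.iterate_succ_apply']
    have hev : (fun y => (DwOp w)^[k] f y / ((w y : ℝ) : ℂ))
        =ᶠ[nhds x] fun y => ((Lrep k).map fun T => tval Θ Df t w (k+1) T y).sum := by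
      filter_upwards [hU.mem_nhds hx] with y hy
      rw [ih (by omega) y hy, list_sum_div]
      refine congrArg List.sum (List.map_congr_left fun T _ => ?_)
      obtain ⟨c, β, ds⟩ := T
      simp only [tval]
      rw [mul_div_assoc, ← Complex.ofReal_div, div_div, ← pow_succ,
        show k + ds.length + 1 = k + 1 + ds.length from by omega]
    show deriv (fun y => (DwOp w)^[k] f y / ((w y : ℝ) : ℂ)) x = _
    rw [hev.deriv_eq]
    have hder : HasDerivAt (fun y => ((Lrep k).map fun T => tval Θ Df t w (k+1) T y).sum)
        (((Lrep k).map fun T =>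
          ((expand (k+1) T).map fun T' => tval Θ Df t w (k+1) T' x).sum).sum) x := by
      refine hasDerivAt_list_sum _ _ _ x fun T hT => ?_
      have hw : HasDerivAt w (t * Θ 2 x) x := ((hΘ 1 (by omega) x hx).const_mul t).const_add ξ
      exact hasDerivAt_tval Θ Df t w (by omega : k < j) (fun n hn => hΘ n hn x hx)
        (fun i hi => hDf i hi x hx) hw (ne_of_gt (hwpos x hx)) (good_Lrep k T hT)
    rw [hder.deriv, Lrep, list_sum_flatMap]


set_option maxHeartbeats 1000000 in
lemma tval_bound (Θ : ℕ → ℝ → ℝ) (Df : ℕ → ℝ → ℂ) (t : ℝ) (ξ : ℝ) (j : ℕ) (x : ℝ)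
    (hθ : 0 < Θ 1 x) (ht : 0 < t) (hξ : 0 ≤ ξ)
    {T : ℤ × ℕ × List ℕ} (hT : Good j T) :
    ‖tval Θ Df t (fun y => ξ + t * Θ 1 y) j T x‖
      ≤ (T.1.natAbs : ℝ) * ((t ^ j)⁻¹ * fWeighted Df Θ j x) := by
  obtain ⟨c, β, ds⟩ := T
  obtain ⟨hsum, hmem⟩ := hT
  dsimp only at hsum hmem
  have hrange : ∀ n ∈ ds, 2 ≤ n ∧ n ≤ j + 1 := fun n hn =>
    ⟨hmem n hn, by have := mem_le_predsum ds hn; have := hmem n hn; omega⟩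
  have hlen : ds.length ≤ j := by have := len_le_predsum ds hmem; omega
  have hβ : β ≤ j := by omega
  have hwpos : 0 < ξ + t * Θ 1 x := by nlinarith
  have hwge : t * Θ 1 x ≤ ξ + t * Θ 1 x := by nlinarith
  -- the tuple
  set a : Fin j → ℕ := fun i => ds.count ((i : ℕ) + 2) with ha
  have hcount : ∀ i : Fin j, a i ≤ j :=
    fun i => le_trans List.count_le_length hlen
  have hsum2 : (ds.map (· - 1)).sum = ∑ i ∈ Finset.range j, ds.count (i+2) * (i + 1) := by
    rw [list_sum_count j (· - 1) ds hrange]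
    exact Finset.sum_congr rfl fun i _ => by norm_num
  have hlensum : ds.length = ∑ i ∈ Finset.range j, ds.count (i+2) := by
    have h1 : (ds.map fun _ => 1).sum = ∑ i ∈ Finset.range j, ds.count (i+2) * 1 :=
      list_sum_count j (fun _ => 1) ds hrange
    simpa using h1
  have hmema : a ∈ tupleSet j β := by
    rw [tupleSet, Finset.mem_filter]
    constructor
    · rw [Fintype.mem_piFinset]
      exact fun i => Finset.mem_range.mpr (by have := hcount i; omega)
    · have h1 : ∑ i : Fin j, ((i : ℕ) + 1) * a i
          = ∑ i ∈ Finset.range j, (i + 1) * ds.count (i+2) := by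
        simp only [ha]
        exact Fin.sum_univ_eq_sum_range (fun i => (i + 1) * ds.count (i+2)) j
      rw [h1, Finset.sum_congr rfl fun i _ => mul_comm (i+1) (ds.count (i+2))]
      omega
  -- norms and the analytic bound
  have hwpos' : 0 < ξ + t * Θ 1 x := hwpos
  have hnorm : ‖tval Θ Df t (fun y => ξ + t * Θ 1 y) j (c, β, ds) x‖
      = (c.natAbs : ℝ) * (‖Df β x‖ *
        (|(ds.map fun n => Θ n x).prod| * t ^ ds.length
          / (ξ + t * Θ 1 x) ^ (j + ds.length))) := by
    simp only [tval, norm_mul, Complex.norm_real, Real.norm_eq_abs, abs_div, abs_mul, abs_pow,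
      abs_of_pos ht, abs_of_pos hwpos']
    rw [Nat.cast_natAbs]
    push_cast [Complex.norm_intCast]
    ring
  have hPrprod : |(ds.map fun n => Θ n x).prod|
      = ∏ i ∈ Finset.range j, |Θ (i+2) x| ^ ds.count (i+2) := by
    rw [list_abs_prod, List.map_map,
      show ((fun r => |r|) ∘ fun n => Θ n x) = fun n => |Θ n x| from rfl,
      list_prod_count j (fun n => |Θ n x|) ds hrange]
  have hkey : |(ds.map fun n => Θ n x).prod| * t ^ ds.length
        / (ξ + t * Θ 1 x) ^ (j + ds.length)
      ≤ (t ^ j)⁻¹ * ((Θ 1 x ^ (j + ds.length))⁻¹ * |(ds.map fun n => Θ n x).prod|) := by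
    have h1 : |(ds.map fun n => Θ n x).prod| * t ^ ds.length
          / (ξ + t * Θ 1 x) ^ (j + ds.length)
        ≤ |(ds.map fun n => Θ n x).prod| * t ^ ds.length
          / (t * Θ 1 x) ^ (j + ds.length) := by
      gcongr
    refine h1.trans_eq ?_
    rw [mul_pow, pow_add]
    field_simp
  have hterm : |Θ 1 x| ^ (-((j : ℝ) + ∑ i : Fin j, (a i : ℝ))) * ∏ i : Fin j, |Θ ((i:ℕ)+2) x| ^ a i
      = (Θ 1 x ^ (j + ds.length))⁻¹ * |(ds.map fun n => Θ n x).prod| := by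
    have hcast : ((j : ℝ) + ∑ i : Fin j, (a i : ℝ)) = ((j + ds.length : ℕ) : ℝ) := by
      have h0 : ∑ i : Fin j, ((a i : ℕ) : ℝ) = ((ds.length : ℕ) : ℝ) := by
        rw [show ds.length = ∑ i ∈ Finset.range j, ds.count (i+2) from hlensum]
        push_cast
        exact Fin.sum_univ_eq_sum_range (fun i => (ds.count (i+2) : ℝ)) j
      rw [h0]
      push_cast
      ring
    rw [hcast, Real.rpow_neg (abs_nonneg _), Real.rpow_natCast, abs_of_pos hθ, hPrprod]
    congr 1
    simp only [ha]
    exact Fin.prod_univ_eq_prod_range (fun i => |Θ (i+2) x| ^ ds.count (i+2)) j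
  have hterm_le : (Θ 1 x ^ (j + ds.length))⁻¹ * |(ds.map fun n => Θ n x).prod|
      ≤ wWeight Θ j β x := by
    rw [← hterm, wWeight]
    have hG : ∀ b : Fin j → ℕ, 0 ≤ |Θ 1 x| ^ (-((j : ℝ) + ∑ i : Fin j, (b i : ℝ))) *
        ∏ i : Fin j, |Θ ((i:ℕ)+2) x| ^ (b i) := fun b =>
      mul_nonneg (Real.rpow_nonneg (abs_nonneg _) _)
        (Finset.prod_nonneg fun i _ => pow_nonneg (abs_nonneg _) _)
    exact Finset.single_le_sum (fun b _ => hG b) hmema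
  have hfw : ‖Df β x‖ * wWeight Θ j β x ≤ fWeighted Df Θ j x := by
    rw [fWeighted]
    have hG : ∀ b : ℕ, 0 ≤ ‖Df b x‖ * wWeight Θ j b x := fun b =>
      mul_nonneg (norm_nonneg _) (wWeight_nonneg Θ j b x)
    exact Finset.single_le_sum (fun b _ => hG b) (Finset.mem_range.mpr (by omega))
  calc ‖tval Θ Df t (fun y => ξ + t * Θ 1 y) j (c, β, ds) x‖
      = (c.natAbs : ℝ) * (‖Df β x‖ *
          (|(ds.map fun n => Θ n x).prod| * t ^ ds.length
            / (ξ + t * Θ 1 x) ^ (j + ds.length))) := hnorm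
    _ ≤ (c.natAbs : ℝ) * (‖Df β x‖ *
          ((t ^ j)⁻¹ * ((Θ 1 x ^ (j + ds.length))⁻¹
            * |(ds.map fun n => Θ n x).prod|))) := by gcongr
    _ = (c.natAbs : ℝ) * ((t ^ j)⁻¹ *
          (‖Df β x‖ * ((Θ 1 x ^ (j + ds.length))⁻¹
            * |(ds.map fun n => Θ n x).prod|))) := by ring
    _ ≤ (c.natAbs : ℝ) * ((t ^ j)⁻¹ * (‖Df β x‖ * wWeight Θ j β x)) := by gcongr
    _ ≤ (c.natAbs : ℝ) * ((t ^ j)⁻¹ * fWeighted Df Θ j x) := by gcongr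


lemma fWeighted_nonneg (Df : ℕ → ℝ → ℂ) (Θ : ℕ → ℝ → ℝ) (k : ℕ) (x : ℝ) :
    0 ≤ fWeighted Df Θ k x :=
  Finset.sum_nonneg fun b _ => mul_nonneg (norm_nonneg _) (wWeight_nonneg Θ k b x)

end S15

open S15 in
/-- Pointwise bound on the iterated integration-by-parts operator: if `θ` is `(j+1)`-times
differentiable on an open set `U` with `θ' > 0`, `f` is `j`-times differentiable on `U`,
`t > 0`, `ξ ≥ 0` and `w = ξ + tθ'`, then `|(D_w^j f)(x)| ≤ C(j) t^{−j} f_{θ,j}(x)` on `U`,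
with `C(j)` depending only on `j`. -/
theorem stmt15 (j : ℕ) (hj : 1 ≤ j) :
    ∃ C : ℝ, 0 < C ∧
      ∀ (U : Set ℝ), IsOpen U →
      ∀ (θ : ℝ → ℝ) (Θ : ℕ → ℝ → ℝ) (f : ℝ → ℂ) (Df : ℕ → ℝ → ℂ),
        Θ 0 = θ → Df 0 = f →
        (∀ n < j + 1, ∀ x ∈ U, HasDerivAt (Θ n) (Θ (n + 1) x) x) →
        (∀ x ∈ U, 0 < Θ 1 x) →
        (∀ i < j, ∀ x ∈ U, HasDerivAt (Df i) (Df (i + 1) x) x) →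
        ∀ t : ℝ, 0 < t → ∀ ξ : ℝ, 0 ≤ ξ →
          ∀ x ∈ U,
            ‖(DwOp (fun y => ξ + t * Θ 1 y))^[j] f x‖
              ≤ C * t ^ (-(j : ℝ)) * fWeighted Df Θ j x := by
  refine ⟨(((3*j+1)^j : ℕ) : ℝ), by positivity, ?_⟩
  intro U hU θ Θ f Df hΘ0 hDf0 hΘ hpos hDf t ht ξ hξ x hx
  have hrep := rep_eq j hj U hU Θ f Df hDf0 hΘ hpos hDf t ht ξ hξ j le_rfl x hx
  rw [hrep, show t ^ (-(j:ℝ)) = (t ^ j)⁻¹ from by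
    rw [Real.rpow_neg ht.le, Real.rpow_natCast]]
  calc ‖((Lrep j).map fun T => tval Θ Df t (fun y => ξ + t * Θ 1 y) j T x).sum‖
      ≤ ((Lrep j).map fun T => ‖tval Θ Df t (fun y => ξ + t * Θ 1 y) j T x‖).sum :=
        norm_list_sum_le _ _
    _ ≤ ((Lrep j).map fun T => (T.1.natAbs : ℝ) * ((t^j)⁻¹ * fWeighted Df Θ j x)).sum :=
        list_sum_le _ _ _ fun T hT =>
          tval_bound Θ Df t ξ j x (hpos x hx) ht hξ (good_Lrep j T hT)
    _ = ((Lrep j).map fun T => (T.1.natAbs : ℝ)).sum * ((t^j)⁻¹ * fWeighted Df Θ j x) :=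
        list_sum_mul _ _ _
    _ = ((weight (Lrep j) : ℕ) : ℝ) * ((t^j)⁻¹ * fWeighted Df Θ j x) := by
        rw [weight, Nat.cast_list_sum, List.map_map]
        rfl
    _ ≤ (((3*j+1)^j : ℕ) : ℝ) * ((t^j)⁻¹ * fWeighted Df Θ j x) := by
        have h1 : (0:ℝ) ≤ (t^j)⁻¹ * fWeighted Df Θ j x :=
          mul_nonneg (by positivity) (fWeighted_nonneg Df Θ j x)
        have h2 : ((weight (Lrep j) : ℕ) : ℝ) ≤ (((3*j+1)^j : ℕ) : ℝ) :=
          Nat.cast_le.mpr (weight_Lrep j j le_rfl)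
        exact mul_le_mul_of_nonneg_right h2 h1
    _ = (((3*j+1)^j : ℕ) : ℝ) * (t^j)⁻¹ * fWeighted Df Θ j x := by ring
end

section
/- Let R be a unital (not necessarily commutative) ring, let T₀, T₁ ∈ R be such that 1 − T₀ and 1 − T₁ are units of R, and set T := T₀ + T₁. Then (1 − T)(1 + T₀(1 − T₀)^{−1} + T₁(1 − T₁)^{−1}) = 1 − T₁T₀(1 − T₀)^{−1} − T₀T₁(1 − T₁)^{−1}, and (1 + (1 − T₀)^{−1}T₀ + (1 − T₁)^{−1}T₁)(1 − T) = 1 − (1 − T₀)^{−1}T₀T₁ − (1 − T₁)^{−1}T₁T₀. -/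
/-- Varzugin parametrix identity: in a unital ring, if `1 − T₀` and `1 − T₁` are units
(with two-sided inverses `S₀ = (1 − T₀)⁻¹`, `S₁ = (1 − T₁)⁻¹`) and `T = T₀ + T₁`, then
`(1 − T)(1 + T₀(1−T₀)⁻¹ + T₁(1−T₁)⁻¹) = 1 − T₁T₀(1−T₀)⁻¹ − T₀T₁(1−T₁)⁻¹` and
`(1 + (1−T₀)⁻¹T₀ + (1−T₁)⁻¹T₁)(1 − T) = 1 − (1−T₀)⁻¹T₀T₁ − (1−T₁)⁻¹T₁T₀`. -/
theorem stmt18 {R : Type*} [Ring R] (T₀ T₁ S₀ S₁ : R)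
    (h₀l : S₀ * (1 - T₀) = 1) (h₀r : (1 - T₀) * S₀ = 1)
    (h₁l : S₁ * (1 - T₁) = 1) (h₁r : (1 - T₁) * S₁ = 1) :
    (1 - (T₀ + T₁)) * (1 + T₀ * S₀ + T₁ * S₁)
        = 1 - T₁ * T₀ * S₀ - T₀ * T₁ * S₁ ∧
    (1 + S₀ * T₀ + S₁ * T₁) * (1 - (T₀ + T₁))
        = 1 - S₀ * (T₀ * T₁) - S₁ * (T₁ * T₀) := by
  have a0 : T₀ * S₀ = S₀ - 1 := by
    linear_combination (norm := noncomm_ring) -h₀r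
  have b0 : S₀ * T₀ = S₀ - 1 := by
    linear_combination (norm := noncomm_ring) -h₀l
  have a1 : T₁ * S₁ = S₁ - 1 := by
    linear_combination (norm := noncomm_ring) -h₁r
  have b1 : S₁ * T₁ = S₁ - 1 := by
    linear_combination (norm := noncomm_ring) -h₁l
  constructor
  · linear_combination (norm := noncomm_ring) T₀ * h₀r + T₁ * h₁r
  · linear_combination (norm := noncomm_ring) h₀l * T₀ + h₁l * T₁
end

section
/- Let X be a Banach space, let T₀, T₁ be bounded linear operators on X such that 1 − T₀ and 1 − T₁ are invertible, and set T := T₀ + T₁. Assume that ‖T₁T₀(1 − T₀)^{−1} + T₀T₁(1 − T₁)^{−1}‖ ≤ 1/2 and ‖(1 − T₀)^{−1}T₀T₁ + (1 − T₁)^{−1}T₁T₀‖ ≤ 1/2 (operator norms). Then 1 − T is invertible and ‖(1 − T)^{−1}‖ ≤ 2(1 + ‖T₀(1 − T₀)^{−1}‖ + ‖T₁(1 − T₁)^{−1}‖); in particular ‖(1 − T)^{−1}‖ ≤ 2(3 + ‖(1 − T₀)^{−1}‖ + ‖(1 − T₁)^{−1}‖). -/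
/-- Quantitative invertibility via the Varzugin parametrix: on a Banach space `X`, if
`1 − T₀` and `1 − T₁` are invertible (with two-sided inverses `S₀`, `S₁`), `T = T₀ + T₁`,
and the cross terms satisfy `‖T₁T₀(1−T₀)⁻¹ + T₀T₁(1−T₁)⁻¹‖ ≤ 1/2` and
`‖(1−T₀)⁻¹T₀T₁ + (1−T₁)⁻¹T₁T₀‖ ≤ 1/2`, then `1 − T` is invertible with
`‖(1−T)⁻¹‖ ≤ 2(1 + ‖T₀(1−T₀)⁻¹‖ + ‖T₁(1−T₁)⁻¹‖)`; in particular
`‖(1−T)⁻¹‖ ≤ 2(3 + ‖(1−T₀)⁻¹‖ + ‖(1−T₁)⁻¹‖)`. -/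
theorem stmt19 {X : Type*} [NormedAddCommGroup X] [NormedSpace ℝ X] [CompleteSpace X]
    (T₀ T₁ S₀ S₁ : X →L[ℝ] X)
    (h₀l : S₀ * (1 - T₀) = 1) (h₀r : (1 - T₀) * S₀ = 1)
    (h₁l : S₁ * (1 - T₁) = 1) (h₁r : (1 - T₁) * S₁ = 1)
    (hcross1 : ‖T₁ * T₀ * S₀ + T₀ * T₁ * S₁‖ ≤ 1 / 2)
    (hcross2 : ‖S₀ * (T₀ * T₁) + S₁ * (T₁ * T₀)‖ ≤ 1 / 2) :
    ∃ S : X →L[ℝ] X,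
      S * (1 - (T₀ + T₁)) = 1 ∧ (1 - (T₀ + T₁)) * S = 1 ∧
      ‖S‖ ≤ 2 * (1 + ‖T₀ * S₀‖ + ‖T₁ * S₁‖) ∧
      ‖S‖ ≤ 2 * (3 + ‖S₀‖ + ‖S₁‖) := by
  set E : X →L[ℝ] X := T₁ * T₀ * S₀ + T₀ * T₁ * S₁ with hE
  set E' : X →L[ℝ] X := S₀ * (T₀ * T₁) + S₁ * (T₁ * T₀) with hE'
  have hElt : ‖E‖ < 1 := lt_of_le_of_lt hcross1 (by norm_num)
  have hE'lt : ‖E'‖ < 1 := lt_of_le_of_lt hcross2 (by norm_num)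
  -- basic identities
  have e0 : T₀ * (T₀ * S₀) = T₀ * S₀ - T₀ := by
    have : T₀ * ((1 - T₀) * S₀) = T₀ := by rw [h₀r, mul_one]
    calc T₀ * (T₀ * S₀) = T₀ * S₀ - T₀ * ((1 - T₀) * S₀) := by noncomm_ring
    _ = T₀ * S₀ - T₀ := by rw [this]
  have e1 : T₁ * (T₁ * S₁) = T₁ * S₁ - T₁ := by
    have : T₁ * ((1 - T₁) * S₁) = T₁ := by rw [h₁r, mul_one]
    calc T₁ * (T₁ * S₁) = T₁ * S₁ - T₁ * ((1 - T₁) * S₁) := by noncomm_ring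
    _ = T₁ * S₁ - T₁ := by rw [this]
  have f0 : S₀ * T₀ * T₀ = S₀ * T₀ - T₀ := by
    have : S₀ * (1 - T₀) * T₀ = T₀ := by rw [h₀l, one_mul]
    calc S₀ * T₀ * T₀ = S₀ * T₀ - S₀ * (1 - T₀) * T₀ := by noncomm_ring
    _ = S₀ * T₀ - T₀ := by rw [this]
  have f1 : S₁ * T₁ * T₁ = S₁ * T₁ - T₁ := by
    have : S₁ * (1 - T₁) * T₁ = T₁ := by rw [h₁l, one_mul]
    calc S₁ * T₁ * T₁ = S₁ * T₁ - S₁ * (1 - T₁) * T₁ := by noncomm_ring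
    _ = S₁ * T₁ - T₁ := by rw [this]
  -- parametrix identities
  have h1 : (1 - (T₀ + T₁)) * (1 + T₀ * S₀ + T₁ * S₁) = 1 - E := by
    have expand : (1 - (T₀ + T₁)) * (1 + T₀ * S₀ + T₁ * S₁)
        = 1 + (T₀ * S₀ - T₀ - T₀ * (T₀ * S₀)) + (T₁ * S₁ - T₁ - T₁ * (T₁ * S₁))
          - (T₁ * T₀ * S₀ + T₀ * T₁ * S₁) := by noncomm_ring
    rw [expand, e0, e1, hE]
    abel
  have h2 : (1 + S₀ * T₀ + S₁ * T₁) * (1 - (T₀ + T₁)) = 1 - E' := by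
    have expand : (1 + S₀ * T₀ + S₁ * T₁) * (1 - (T₀ + T₁))
        = 1 + (S₀ * T₀ - T₀ - S₀ * T₀ * T₀) + (S₁ * T₁ - T₁ - S₁ * T₁ * T₁)
          - (S₀ * (T₀ * T₁) + S₁ * (T₁ * T₀)) := by noncomm_ring
    rw [expand, f0, f1, hE']
    abel
  -- geometric series inverses
  set G : X →L[ℝ] X := ∑' n : ℕ, E ^ n with hG
  set G' : X →L[ℝ] X := ∑' n : ℕ, E' ^ n with hG'
  have hGr : (1 - E) * G = 1 := mul_neg_geom_series E hElt
  have hG'l : G' * (1 - E') = 1 := geom_series_mul_neg E' hE'lt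
  set S : X →L[ℝ] X := (1 + T₀ * S₀ + T₁ * S₁) * G with hS
  have hright : (1 - (T₀ + T₁)) * S = 1 := by
    rw [hS, ← mul_assoc, h1, hGr]
  set L : X →L[ℝ] X := G' * (1 + S₀ * T₀ + S₁ * T₁) with hL
  have hleft : L * (1 - (T₀ + T₁)) = 1 := by
    rw [hL, mul_assoc, h2, hG'l]
  have hLS : L = S := by
    calc L = L * ((1 - (T₀ + T₁)) * S) := by rw [hright, mul_one]
    _ = L * (1 - (T₀ + T₁)) * S := (mul_assoc L _ _).symm
    _ = S := by rw [hleft, one_mul]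
  have hSleft : S * (1 - (T₀ + T₁)) = 1 := by rw [← hLS]; exact hleft
  -- norm estimates
  have hnorm1 : ‖(1 : X →L[ℝ] X)‖ ≤ 1 := ContinuousLinearMap.norm_id_le
  have hGnorm : ‖G‖ ≤ 2 := by
    have := tsum_geometric_le_of_norm_lt_one E hElt
    have h2' : (1 - ‖E‖)⁻¹ ≤ 2 := by
      rw [inv_le_comm₀ (by linarith) (by norm_num)]
      linarith
    calc ‖G‖ ≤ ‖(1 : X →L[ℝ] X)‖ - 1 + (1 - ‖E‖)⁻¹ := this
    _ ≤ 2 := by linarith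
  have hPnorm : ‖(1 + T₀ * S₀ + T₁ * S₁ : X →L[ℝ] X)‖ ≤ 1 + ‖T₀ * S₀‖ + ‖T₁ * S₁‖ := by
    calc ‖(1 + T₀ * S₀ + T₁ * S₁ : X →L[ℝ] X)‖
        ≤ ‖(1 : X →L[ℝ] X)‖ + ‖T₀ * S₀‖ + ‖T₁ * S₁‖ :=
          le_trans (norm_add_le _ _) (by gcongr; exact norm_add_le _ _)
    _ ≤ 1 + ‖T₀ * S₀‖ + ‖T₁ * S₁‖ := by linarith
  have hSnorm : ‖S‖ ≤ 2 * (1 + ‖T₀ * S₀‖ + ‖T₁ * S₁‖) := by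
    have hP0 : (0:ℝ) ≤ 1 + ‖T₀ * S₀‖ + ‖T₁ * S₁‖ := by positivity
    calc ‖S‖ ≤ ‖(1 + T₀ * S₀ + T₁ * S₁ : X →L[ℝ] X)‖ * ‖G‖ := norm_mul_le _ _
    _ ≤ (1 + ‖T₀ * S₀‖ + ‖T₁ * S₁‖) * 2 := by
        exact mul_le_mul hPnorm hGnorm (norm_nonneg _) hP0
    _ = 2 * (1 + ‖T₀ * S₀‖ + ‖T₁ * S₁‖) := by ring
  have hts0 : ‖T₀ * S₀‖ ≤ ‖S₀‖ + 1 := by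
    have : T₀ * S₀ = S₀ - 1 := by
      have := h₀r
      calc T₀ * S₀ = S₀ - (1 - T₀) * S₀ := by noncomm_ring
      _ = S₀ - 1 := by rw [this]
    rw [this]
    calc ‖S₀ - (1 : X →L[ℝ] X)‖ ≤ ‖S₀‖ + ‖(1 : X →L[ℝ] X)‖ := norm_sub_le _ _
    _ ≤ ‖S₀‖ + 1 := by linarith
  have hts1 : ‖T₁ * S₁‖ ≤ ‖S₁‖ + 1 := by
    have : T₁ * S₁ = S₁ - 1 := by
      have := h₁r
      calc T₁ * S₁ = S₁ - (1 - T₁) * S₁ := by noncomm_ring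
      _ = S₁ - 1 := by rw [this]
    rw [this]
    calc ‖S₁ - (1 : X →L[ℝ] X)‖ ≤ ‖S₁‖ + ‖(1 : X →L[ℝ] X)‖ := norm_sub_le _ _
    _ ≤ ‖S₁‖ + 1 := by linarith
  exact ⟨S, hSleft, hright, hSnorm, by nlinarith [norm_nonneg (T₀ * S₀), norm_nonneg (T₁ * S₁)]⟩
end
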